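/- arXiv:2109.09142 — 6 statements merged into one kernel-verified Lean document; each statement's English description precedes it below -/
import Mathlib

section
/- Let ε ∈ (0,1), δ ∈ (0,1), Δ > 0, and a > 0 with a² > 2·ln(1.25/δ). Let σ ≥ a·Δ/ε. Then for all y, y' ∈ ℝ with |y − y'| ≤ Δ and every Borel set S ⊆ ℝ, the Gaussian measures satisfy N(y, σ²)(S) ≤ e^ε · N(y', σ²)(S) + δ. -/
open MeasureTheory ProbabilityTheory Real Set

section GaussAux
open MeasureTheory ProbabilityTheory Real Set


lemma neg_map : (gaussianReal 0 1).map ((-1 : ℝ) * ·) = gaussianReal 0 1 := by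
  rw [gaussianReal_map_const_mul (-1 : ℝ)]
  norm_num

lemma gauss_half : gaussianReal 0 1 (Set.Ioi (0:ℝ)) = 1/2 := by
  set ν := gaussianReal 0 1 with hν
  have hsing : ν {(0:ℝ)} = 0 :=
    gaussianReal_absolutelyContinuous 0 one_ne_zero (measure_singleton 0)
  have hIio : ν (Set.Iio 0) = ν (Set.Ioi 0) := by
    conv_lhs => rw [hν, ← neg_map]
    rw [Measure.map_apply (by fun_prop) measurableSet_Iio]
    norm_num [hν]
  have hcompl : ν (Set.Ioi 0) + ν (Set.Iic 0) = 1 := by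
    rw [← Set.compl_Ioi, measure_add_measure_compl measurableSet_Ioi]
    simp [hν]
  have hIic : ν (Set.Iic 0) = ν (Set.Ioi 0) := by
    rw [← Set.Iio_union_right, measure_union (by simp) (measurableSet_singleton 0), hsing,
      add_zero, hIio]
  rw [hIic, ← mul_two] at hcompl
  rw [ENNReal.eq_div_iff (by norm_num) (by norm_num)]
  exact (mul_comm 2 (ν (Set.Ioi 0))).trans hcompl

lemma ennhalf : ENNReal.ofReal (1/2 : ℝ) = 1/2 := by
  rw [ENNReal.ofReal_div_of_pos (by norm_num)]
  norm_num

lemma gauss_shift_half (t : ℝ) : gaussianReal t 1 (Set.Ioi t) = 1/2 := by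
  have h := gaussianReal_map_add_const (μ := 0) (v := 1) t
  rw [zero_add] at h
  rw [← h, Measure.map_apply (by fun_prop) measurableSet_Ioi]
  have : (fun x : ℝ => x + t) ⁻¹' (Set.Ioi t) = Set.Ioi 0 := by
    ext x; simp
  rw [this, gauss_half]

lemma tail_pos {t : ℝ} (ht : 0 ≤ t) :
    gaussianReal 0 1 (Set.Ioi t) ≤ ENNReal.ofReal (Real.exp (-t^2/2) / 2) := by
  rw [gaussianReal_apply 0 one_ne_zero]
  have hpw : ∀ x ∈ Set.Ioi t, gaussianPDF 0 1 x
      ≤ ENNReal.ofReal (Real.exp (-t^2/2)) * gaussianPDF t 1 x := by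
    intro x hx
    simp only [gaussianPDF, ← ENNReal.ofReal_mul (Real.exp_nonneg _)]
    apply ENNReal.ofReal_le_ofReal
    simp only [gaussianPDFReal, NNReal.coe_one, mul_one]
    have hx' : t < x := hx
    have h1 : rexp (-(x-0)^2/(2*1)) ≤ rexp (-t^2/2) * rexp (-(x-t)^2/(2*1)) := by
      rw [← Real.exp_add]
      apply Real.exp_le_exp.mpr
      nlinarith [mul_nonneg ht (le_of_lt (sub_pos.mpr hx'))]
    nlinarith [h1, inv_nonneg.mpr (Real.sqrt_nonneg (2*π)), Real.exp_nonneg (-(x-0)^2/(2*1)),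
      Real.exp_nonneg (-t^2/2), Real.exp_nonneg (-(x-t)^2/(2*1))]
  calc ∫⁻ x in Set.Ioi t, gaussianPDF 0 1 x
      ≤ ∫⁻ x in Set.Ioi t, ENNReal.ofReal (Real.exp (-t^2/2)) * gaussianPDF t 1 x :=
        setLIntegral_mono (measurable_const.mul (measurable_gaussianPDF t 1)) hpw
    _ = ENNReal.ofReal (Real.exp (-t^2/2)) * ∫⁻ x in Set.Ioi t, gaussianPDF t 1 x :=
        lintegral_const_mul _ (measurable_gaussianPDF t 1)
    _ = ENNReal.ofReal (Real.exp (-t^2/2)) * gaussianReal t 1 (Set.Ioi t) := by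
        rw [gaussianReal_apply t one_ne_zero]
    _ ≤ ENNReal.ofReal (Real.exp (-t^2/2) / 2) := by
        rw [gauss_shift_half, ← ennhalf, ← ENNReal.ofReal_mul (Real.exp_nonneg _)]
        apply ENNReal.ofReal_le_ofReal
        rw [mul_one_div]

lemma tail_neg {t : ℝ} (ht : t ≤ 0) :
    gaussianReal 0 1 (Set.Ioi t) ≤ ENNReal.ofReal (1/2 - t * (Real.sqrt (2*Real.pi))⁻¹) := by
  have hsplit : Set.Ioc t 0 ∪ Set.Ioi (0:ℝ) = Set.Ioi t := Set.Ioc_union_Ioi_eq_Ioi ht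
  have hu : gaussianReal 0 1 (Set.Ioi t)
      ≤ gaussianReal 0 1 (Set.Ioc t 0) + gaussianReal 0 1 (Set.Ioi 0) := by
    rw [← hsplit]; exact measure_union_le _ _
  have hIoc : gaussianReal 0 1 (Set.Ioc t 0) ≤ ENNReal.ofReal (-t * (Real.sqrt (2*Real.pi))⁻¹) := by
    rw [gaussianReal_apply 0 one_ne_zero]
    calc ∫⁻ x in Set.Ioc t 0, gaussianPDF 0 1 x
        ≤ ∫⁻ _x in Set.Ioc t 0, ENNReal.ofReal ((Real.sqrt (2*Real.pi))⁻¹) := by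
          apply setLIntegral_mono measurable_const
          intro x _
          apply ENNReal.ofReal_le_ofReal
          simp only [gaussianPDFReal, NNReal.coe_one, mul_one]
          calc (Real.sqrt (2*Real.pi))⁻¹ * Real.exp (-(x-0)^2/2)
              ≤ (Real.sqrt (2*Real.pi))⁻¹ * 1 := by
                apply mul_le_mul_of_nonneg_left _ (by positivity)
                apply Real.exp_le_one_iff.mpr
                nlinarith [sq_nonneg (x - 0)]
            _ = (Real.sqrt (2*Real.pi))⁻¹ := mul_one _
      _ = ENNReal.ofReal ((Real.sqrt (2*Real.pi))⁻¹) * volume (Set.Ioc t 0) :=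
          setLIntegral_const _ _
      _ ≤ ENNReal.ofReal (-t * (Real.sqrt (2*Real.pi))⁻¹) := by
          rw [Real.volume_Ioc, ← ENNReal.ofReal_mul (by positivity)]
          apply ENNReal.ofReal_le_ofReal
          rw [mul_comm]
          apply mul_le_mul_of_nonneg_right _ (by positivity)
          linarith
  calc gaussianReal 0 1 (Set.Ioi t)
      ≤ ENNReal.ofReal (-t * (Real.sqrt (2*Real.pi))⁻¹) + gaussianReal 0 1 (Set.Ioi 0) :=
        hu.trans (add_le_add_left hIoc _)
    _ = ENNReal.ofReal (-t * (Real.sqrt (2*Real.pi))⁻¹) + ENNReal.ofReal (1/2) := by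
        rw [gauss_half, ennhalf]
    _ ≤ ENNReal.ofReal (1/2 - t * (Real.sqrt (2*Real.pi))⁻¹) := by
        rw [← ENNReal.ofReal_add (mul_nonneg (neg_nonneg.mpr ht) (by positivity)) (by norm_num)]
        apply ENNReal.ofReal_le_ofReal
        linarith
lemma num_pos {a δ t : ℝ} (ha : 0 < a) (hδ0 : 0 < δ) (hδ1 : δ < 1)
    (ha2 : 2 * Real.log (1.25 / δ) < a ^ 2) (ht : t = a - 1/(2*a)) :
    Real.exp (-t^2/2) / 2 ≤ δ := by
  have hlog : Real.log (1.25 / δ) < a^2/2 := by linarith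
  have hcancel : a * (1/(2*a)) = 1/2 := by field_simp
  have ht2 : a^2 - 1 ≤ t^2 := by
    subst ht; nlinarith [sq_nonneg (1/(2*a))]
  have h1 : Real.exp (-t^2/2) ≤ Real.exp (1/2) * (δ / 1.25) := by
    have h0 : Real.exp (-t^2/2) ≤ Real.exp (1/2 - Real.log (1.25/δ)) := by
      apply Real.exp_le_exp.mpr; linarith
    rw [Real.exp_sub, Real.exp_log (by positivity)] at h0
    calc Real.exp (-t^2/2) ≤ Real.exp (1/2) / (1.25/δ) := h0
      _ = Real.exp (1/2) * (δ/1.25) := by field_simp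
  have h2 : Real.exp (1/2) ≤ 1.649 := by
    have he : Real.exp 1 < 2.7182818286 := Real.exp_one_lt_d9
    have hsq : Real.exp (1/2) * Real.exp (1/2) = Real.exp 1 := by
      rw [← Real.exp_add]; norm_num
    nlinarith [Real.exp_pos (1/2)]
  have h3 : Real.exp (1/2) * (δ/1.25) ≤ 1.649 * (δ/1.25) := by
    apply mul_le_mul_of_nonneg_right h2 (by positivity)
  have h4 : (1.649:ℝ) * (δ/1.25) = 1.3192 * δ := by ring
  nlinarith

lemma num_neg {a δ t : ℝ} (ha : 0 < a) (hδ0 : 0 < δ) (hδ1 : δ < 1)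
    (ha2 : 2 * Real.log (1.25 / δ) < a ^ 2) (ht : t = a - 1/(2*a)) (ht0 : t < 0) :
    1/2 - t * (Real.sqrt (2*Real.pi))⁻¹ ≤ δ := by
  have hexp : 1.25 / δ < Real.exp (a^2/2) := by
    calc 1.25 / δ = Real.exp (Real.log (1.25/δ)) := (Real.exp_log (by positivity)).symm
      _ < Real.exp (a^2/2) := Real.exp_lt_exp.mpr (by linarith)
  have hlog125 : (0.2:ℝ) ≤ Real.log 1.25 := by
    have h08 : Real.log 0.8 ≤ -0.2 := by
      have := Real.log_le_sub_one_of_pos (by norm_num : (0:ℝ) < 0.8)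
      linarith
    have hi : Real.log 1.25 = - Real.log 0.8 := by
      rw [← Real.log_inv]; norm_num
    linarith
  have hloge : Real.log 1.25 ≤ Real.log (1.25/δ) := by
    apply Real.log_le_log (by norm_num)
    rw [le_div_iff₀ hδ0]; nlinarith
  have ha04 : (0.4:ℝ) < a^2 := by nlinarith
  have ha632 : (0.632:ℝ) < a := by nlinarith
  have hmt : -t ≤ 0.792 := by
    subst ht
    have h1 : 1/(2*a) ≤ 1/(2*0.632) := by
      apply one_div_le_one_div_of_le (by norm_num) (by linarith)
    have h2 : (1:ℝ)/(2*0.632) ≤ 0.792 := by norm_num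
    linarith
  have hsqrt : (2.5:ℝ) ≤ Real.sqrt (2*π) := by
    rw [show (2.5:ℝ) = Real.sqrt (2.5^2) by rw [Real.sqrt_sq]; norm_num]
    apply Real.sqrt_le_sqrt
    nlinarith [Real.pi_gt_d6]
  have hinv : (Real.sqrt (2*π))⁻¹ ≤ 0.4 := by
    rw [show (0.4:ℝ) = (2.5:ℝ)⁻¹ by norm_num]
    exact inv_anti₀ (by norm_num) hsqrt
  have hquarter : a^2/2 < 1/4 := by
    have h1 : a < 1/(2*a) := by linarith [ht0, ht ▸ ht0]
    have h2 : a * (2*a) < 1 := (lt_div_iff₀ (by positivity)).mp h1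
    nlinarith
  have hexp4 : Real.exp (1/4) ≤ 1.2841 := by
    have he : Real.exp 1 < 2.7182818286 := Real.exp_one_lt_d9
    have hsq : (Real.exp (1/4))^4 = Real.exp 1 := by
      rw [← Real.exp_nat_mul]; norm_num
    have hp : (0:ℝ) < Real.exp (1/4) := Real.exp_pos _
    by_contra hcon
    push_neg at hcon
    have h2 : (1.64891:ℝ) < (Real.exp (1/4))^2 := by nlinarith
    nlinarith
  have hδbig : (0.973:ℝ) ≤ δ := by
    have h1 : 1.25 / δ < Real.exp (1/4) :=
      hexp.trans_le (Real.exp_le_exp.mpr (by linarith))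
    have h2 : 1.25 / δ < 1.2841 := lt_of_lt_of_le h1 hexp4
    rw [div_lt_iff₀ hδ0] at h2
    nlinarith
  have hneg : -t * (Real.sqrt (2*π))⁻¹ ≤ 0.792 * 0.4 :=
    mul_le_mul hmt hinv (by positivity) (by norm_num)
  nlinarith

lemma key_tail {a δ : ℝ} (ha : 0 < a) (hδ0 : 0 < δ) (hδ1 : δ < 1)
    (ha2 : 2 * Real.log (1.25 / δ) < a ^ 2) :
    gaussianReal 0 1 (Set.Ioi (a - 1/(2*a))) ≤ ENNReal.ofReal δ := by
  rcases le_or_gt 0 (a - 1/(2*a)) with ht | ht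
  · exact (tail_pos ht).trans
      (ENNReal.ofReal_le_ofReal (num_pos ha hδ0 hδ1 ha2 rfl))
  · exact (tail_neg ht.le).trans
      (ENNReal.ofReal_le_ofReal (num_neg ha hδ0 hδ1 ha2 rfl ht))

lemma gauss_Iio (m : ℝ) : gaussianReal 0 1 (Set.Iio m) = gaussianReal 0 1 (Set.Ioi (-m)) := by
  conv_lhs => rw [← neg_map]
  rw [Measure.map_apply (by fun_prop) measurableSet_Iio]
  congr 1
  ext x
  simp only [Set.mem_preimage, Set.mem_Iio, Set.mem_Ioi]
  constructor <;> intro h <;> linarith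

end GaussAux

set_option maxHeartbeats 1000000 in
/-- **Gaussian mechanism (one-dimensional).** For `ε ∈ (0,1)`, `δ ∈ (0,1)`, sensitivity `Δ > 0`
and `a > 0` with `a² > 2 ln(1.25/δ)`, if `σ ≥ aΔ/ε` then for any two adjacent outputs
`y, y'` (i.e. `|y - y'| ≤ Δ`) and any Borel set `S`,
`N(y, σ²)(S) ≤ e^ε · N(y', σ²)(S) + δ`. -/
theorem gaussian_mechanism_dp (ε δ Δ a σ : ℝ)
    (hε : ε ∈ Set.Ioo (0 : ℝ) 1) (hδ : δ ∈ Set.Ioo (0 : ℝ) 1)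
    (hΔ : 0 < Δ) (ha : 0 < a)
    (ha2 : 2 * Real.log (1.25 / δ) < a ^ 2)
    (hσ : a * Δ / ε ≤ σ) :
    ∀ y y' : ℝ, |y - y'| ≤ Δ → ∀ S : Set ℝ, MeasurableSet S →
      gaussianReal y (Real.toNNReal (σ ^ 2)) S ≤
        ENNReal.ofReal (Real.exp ε) * gaussianReal y' (Real.toNNReal (σ ^ 2)) S
          + ENNReal.ofReal δ := by
  obtain ⟨hε0, hε1⟩ := hε
  obtain ⟨hδ0, hδ1⟩ := hδ
  intro y y' hadj S hS
  have hσ0 : 0 < σ := lt_of_lt_of_le (by positivity) hσ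
  set v : NNReal := Real.toNNReal (σ^2) with hvdef
  have hv : v ≠ 0 := by
    rw [hvdef, Ne, Real.toNNReal_eq_zero, not_le]
    positivity
  have hvr : (v : ℝ) = σ^2 := Real.coe_toNNReal _ (sq_nonneg σ)
  set G : Set ℝ := {x : ℝ | (y - y') * (2*x - y - y') ≤ 2*σ^2*ε} with hGdef
  have hG : MeasurableSet G := measurableSet_le (by fun_prop) measurable_const
  -- pointwise density comparison on G
  have hpw : ∀ x ∈ S ∩ G, gaussianPDF y v x ≤ ENNReal.ofReal (Real.exp ε) * gaussianPDF y' v x := by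
    intro x hx
    have hxG : (y - y') * (2*x - y - y') ≤ 2*σ^2*ε := hx.2
    simp only [gaussianPDF, ← ENNReal.ofReal_mul (Real.exp_nonneg ε)]
    apply ENNReal.ofReal_le_ofReal
    simp only [gaussianPDFReal, hvr]
    have h2σ : (0:ℝ) < 2*σ^2 := by positivity
    have hkey : -(x-y)^2/(2*σ^2) ≤ ε + -(x-y')^2/(2*σ^2) := by
      have h0 : -(x-y)^2 ≤ ε*(2*σ^2) + -(x-y')^2 := by nlinarith [hxG]
      calc -(x-y)^2/(2*σ^2) ≤ (ε*(2*σ^2) + -(x-y')^2)/(2*σ^2) := by gcongr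
        _ = ε + -(x-y')^2/(2*σ^2) := by field_simp
    have h1 : Real.exp (-(x-y)^2/(2*σ^2)) ≤ Real.exp ε * Real.exp (-(x-y')^2/(2*σ^2)) := by
      rw [← Real.exp_add]
      exact Real.exp_le_exp.mpr hkey
    nlinarith [h1, inv_nonneg.mpr (Real.sqrt_nonneg (2*π*σ^2)),
      Real.exp_nonneg (-(x-y)^2/(2*σ^2)), Real.exp_nonneg (-(x-y')^2/(2*σ^2)),
      Real.exp_nonneg ε]
  have h_good : gaussianReal y v (S ∩ G)
      ≤ ENNReal.ofReal (Real.exp ε) * gaussianReal y' v S := by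
    rw [gaussianReal_apply y hv, gaussianReal_apply y' hv]
    calc ∫⁻ x in S ∩ G, gaussianPDF y v x
        ≤ ∫⁻ x in S ∩ G, ENNReal.ofReal (Real.exp ε) * gaussianPDF y' v x :=
          setLIntegral_mono (measurable_const.mul (measurable_gaussianPDF y' v)) hpw
      _ = ENNReal.ofReal (Real.exp ε) * ∫⁻ x in S ∩ G, gaussianPDF y' v x :=
          lintegral_const_mul _ (measurable_gaussianPDF y' v)
      _ ≤ ENNReal.ofReal (Real.exp ε) * ∫⁻ x in S, gaussianPDF y' v x :=
          mul_le_mul_right (lintegral_mono_set Set.inter_subset_left) _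
  -- the bad event
  have hσε : a * Δ ≤ σ * ε := by
    rw [div_le_iff₀ hε0] at hσ
    linarith
  have u_bound : ∀ e : ℝ, 0 < e → e ≤ Δ →
      a - 1/(2*a) ≤ (σ^2*ε - e^2/2)/(e*σ) := by
    intro e he heΔ
    rw [le_div_iff₀ (by positivity : (0:ℝ) < e*σ)]
    have haeΔ : a * e ≤ a * Δ := mul_le_mul_of_nonneg_left heΔ ha.le
    have hae : a * e ≤ σ := by nlinarith
    have f1 : 0 ≤ σ*(σ*ε - a*e) := mul_nonneg hσ0.le (by linarith)
    have f2' : e^2/2 ≤ (1/(2*a))*(e*σ) := by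
      have h3 : e^2 * a ≤ e * σ := by nlinarith
      calc e^2/2 = (e^2*a)/(2*a) := by field_simp
        _ ≤ (e*σ)/(2*a) := by gcongr
        _ = (1/(2*a))*(e*σ) := by ring
    nlinarith [f1, f2']
  have h_bad : gaussianReal y v Gᶜ ≤ ENNReal.ofReal δ := by
    by_cases hd0 : y - y' = 0
    · have hempty : Gᶜ = (∅ : Set ℝ) := by
        ext x
        simp only [Set.mem_compl_iff, hGdef, Set.mem_setOf_eq, hd0, zero_mul, not_le,
          Set.mem_empty_iff_false, iff_false, not_lt]
        positivity
      rw [hempty]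
      simp
    · have hmapy : gaussianReal y v = (gaussianReal 0 v).map (· + y) := by
        rw [gaussianReal_map_add_const y, zero_add]
      have hmapσ : gaussianReal 0 v = (gaussianReal 0 1).map (σ * ·) := by
        rw [gaussianReal_map_const_mul σ, mul_zero]
        congr 1
        apply NNReal.coe_injective
        push_cast
        rw [hvr, mul_one]
      set c : ℝ := σ^2*ε - (y-y')^2/2 with hcdef
      have hpre1 : ((· + y) : ℝ → ℝ) ⁻¹' Gᶜ = {z : ℝ | c < (y - y') * z} := by
        ext z
        simp only [Set.mem_preimage, Set.mem_compl_iff, hGdef, Set.mem_setOf_eq, not_le, hcdef]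
        constructor <;> intro h <;> nlinarith
      have hBmeas : MeasurableSet {z : ℝ | c < (y - y') * z} :=
        measurableSet_lt measurable_const (by fun_prop)
      have step1 : gaussianReal y v Gᶜ = gaussianReal 0 v {z : ℝ | c < (y - y') * z} := by
        rw [hmapy, Measure.map_apply (by fun_prop) hG.compl, hpre1]
      rw [step1, hmapσ, Measure.map_apply (by fun_prop) hBmeas]
      rcases lt_or_gt_of_ne hd0 with hdneg | hdpos
      · -- y - y' < 0
        have hd : 0 < -(y - y') := by linarith
        have hq : (y - y') * σ < 0 := mul_neg_of_neg_of_pos hdneg hσ0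
        have hpre2 : ((σ * ·) : ℝ → ℝ) ⁻¹' {z : ℝ | c < (y - y') * z}
            = Set.Iio (c / ((y-y') * σ)) := by
          ext w
          simp only [Set.mem_preimage, Set.mem_setOf_eq, Set.mem_Iio]
          rw [lt_div_iff_of_neg hq, show w * ((y-y')*σ) = (y - y') * (σ * w) by ring]
        rw [hpre2, show c / ((y-y')*σ) = -(c / (-(y-y') * σ)) by
          rw [neg_mul, div_neg, neg_neg], gauss_Iio, neg_neg]
        have hsub : Set.Ioi (c / (-(y-y') * σ)) ⊆ Set.Ioi (a - 1/(2*a)) := by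
          apply Set.Ioi_subset_Ioi
          have := u_bound (-(y-y')) hd (by rw [abs_le] at hadj; linarith [hadj.1])
          calc a - 1/(2*a) ≤ (σ^2*ε - (-(y-y'))^2/2)/((-(y-y'))*σ) := this
            _ = c / (-(y-y') * σ) := by rw [hcdef]; ring_nf
        exact (measure_mono hsub).trans (key_tail ha hδ0 hδ1 ha2)
      · -- y - y' > 0
        have hpre2 : ((σ * ·) : ℝ → ℝ) ⁻¹' {z : ℝ | c < (y - y') * z}
            = Set.Ioi (c / ((y-y') * σ)) := by
          ext w
          simp only [Set.mem_preimage, Set.mem_setOf_eq, Set.mem_Ioi]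
          rw [div_lt_iff₀ (mul_pos hdpos hσ0), show w * ((y-y')*σ) = (y - y') * (σ * w) by ring]
        rw [hpre2]
        have hsub : Set.Ioi (c / ((y-y') * σ)) ⊆ Set.Ioi (a - 1/(2*a)) := by
          apply Set.Ioi_subset_Ioi
          have := u_bound (y-y') hdpos (by rw [abs_le] at hadj; linarith [hadj.2])
          calc a - 1/(2*a) ≤ (σ^2*ε - (y-y')^2/2)/((y-y')*σ) := this
            _ = c / ((y-y') * σ) := by rw [hcdef]
        exact (measure_mono hsub).trans (key_tail ha hδ0 hδ1 ha2)
  calc gaussianReal y v S = gaussianReal y v (S ∩ G) + gaussianReal y v (S \ G) :=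
        (measure_inter_add_diff S hG).symm
    _ ≤ ENNReal.ofReal (Real.exp ε) * gaussianReal y' v S + ENNReal.ofReal δ := by
        apply add_le_add h_good
        exact (measure_mono (fun x hx => hx.2)).trans h_bad
end

section
/- Fix N ≥ 2, a worker index i, positive reals γ, g_max, channel gains |h_1|,…,|h_N| > 0, powers P_1,…,P_N > 0, power fractions β_1,…,β_N ≥ 0, noise parameters σ > 0, σ_m ≥ 0, and δ ∈ (0,1). Let Δ = 2γ·g_max·√(min_j |h_j|²P_j), let σ_s² = Σ_{k≠i} |h_k|²β_k P_k σ² + σ_m², and let ε_i = (Δ/σ_s)·√(2·ln(1.25/δ)). If 0 < ε_i < 1, then for all y, y' ∈ ℝ with |y − y'| ≤ Δ and every Borel set S ⊆ ℝ, N(y, σ_s²)(S) ≤ e^{ε_i} · N(y', σ_s²)(S) + δ. In other words, the aggregated signal received by worker i, perturbed by the workers' Gaussian noise and the channel noise, is (ε_i, δ)-differentially private with ε_i = (2γ g_max √(min_j |h_j|²P_j) / √(Σ_{k≠i}|h_k|²β_k P_k σ² + σ_m²))·√(2 ln(1.25/δ)). -/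
open MeasureTheory ProbabilityTheory Finset

open Real
open scoped NNReal ENNReal

namespace DWFL

lemma gauss_neg_map (v : ℝ≥0) :
    (gaussianReal 0 v).map (fun x : ℝ => -x) = gaussianReal 0 v := by
  have h := gaussianReal_map_const_mul (μ := 0) (v := v) (-1)
  norm_num at h
  convert h using 2

lemma gauss_half (v : ℝ≥0) (m : ℝ) : gaussianReal m v (Set.Ioi m) ≤ 1/2 := by
  by_cases hv : v = 0
  · rw [hv, gaussianReal_zero_var, Measure.dirac_apply' _ measurableSet_Ioi,
      Set.indicator_of_notMem (by simp)]
    simp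
  have hmap : (gaussianReal 0 v).map (· + m) = gaussianReal m v := by
    rw [gaussianReal_map_add_const]; simp
  have hIoi : gaussianReal m v (Set.Ioi m) = gaussianReal 0 v (Set.Ioi 0) := by
    rw [← hmap, Measure.map_apply (measurable_add_const m) measurableSet_Ioi]
    congr 1; ext x; simp
  have hIio : gaussianReal m v (Set.Iio m) = gaussianReal 0 v (Set.Ioi 0) := by
    have h1 : gaussianReal m v (Set.Iio m) = gaussianReal 0 v (Set.Iio 0) := by
      rw [← hmap, Measure.map_apply (measurable_add_const m) measurableSet_Iio]
      congr 1; ext x; simp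
    rw [h1]
    calc gaussianReal 0 v (Set.Iio 0)
        = (gaussianReal 0 v).map (fun x : ℝ => -x) (Set.Iio 0) := by rw [gauss_neg_map]
      _ = gaussianReal 0 v ((fun x : ℝ => -x) ⁻¹' Set.Iio 0) :=
          Measure.map_apply measurable_neg measurableSet_Iio
      _ = gaussianReal 0 v (Set.Ioi 0) := by
          rw [show ((fun x : ℝ => -x) ⁻¹' Set.Iio 0) = Set.Ioi 0 from by ext x; simp]
  have hsum : gaussianReal 0 v (Set.Ioi 0) + gaussianReal 0 v (Set.Ioi 0) ≤ 1 := by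
    calc gaussianReal 0 v (Set.Ioi 0) + gaussianReal 0 v (Set.Ioi 0)
        = gaussianReal m v (Set.Ioi m) + gaussianReal m v (Set.Iio m) := by rw [hIoi, hIio]
      _ = gaussianReal m v (Set.Ioi m ∪ Set.Iio m) :=
          (measure_union (Set.disjoint_left.2 fun x h1 h2 => lt_asymm h1 h2)
            measurableSet_Iio).symm
      _ ≤ 1 := prob_le_one
  rw [hIoi, ENNReal.le_div_iff_mul_le (Or.inl two_ne_zero) (Or.inl ENNReal.ofNat_ne_top), mul_two]
  exact hsum

lemma gauss_tail_nonneg (v : ℝ≥0) (hv : v ≠ 0) {r : ℝ} (hr : 0 ≤ r) :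
    gaussianReal 0 v (Set.Ioi r) ≤ ENNReal.ofReal (Real.exp (-r^2/(2*(v:ℝ))) / 2) := by
  have hvpos : (0:ℝ) < (v:ℝ) := by
    have h0 : v ≠ 0 := hv
    positivity
  rw [gaussianReal_apply _ hv]
  have hpt : ∀ x ∈ Set.Ioi r, gaussianPDF 0 v x ≤
      ENNReal.ofReal (Real.exp (-r^2/(2*(v:ℝ)))) * gaussianPDF r v x := by
    intro x hx
    have hx' : r < x := hx
    rw [gaussianPDF, gaussianPDF, ← ENNReal.ofReal_mul (Real.exp_nonneg _)]
    apply ENNReal.ofReal_le_ofReal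
    rw [gaussianPDFReal, gaussianPDFReal]
    have hexp : rexp (-(x-0)^2/(2*(v:ℝ))) ≤
        rexp (-r^2/(2*(v:ℝ))) * rexp (-(x-r)^2/(2*(v:ℝ))) := by
      rw [← Real.exp_add]
      apply Real.exp_le_exp.2
      rw [← add_div, div_le_div_iff₀ (by positivity) (by positivity)]
      nlinarith [mul_nonneg (mul_nonneg hr (sub_nonneg.2 hx'.le)) hvpos.le]
    calc (√(2*π*(v:ℝ)))⁻¹ * rexp (-(x-0)^2/(2*(v:ℝ)))
        ≤ (√(2*π*(v:ℝ)))⁻¹ * (rexp (-r^2/(2*(v:ℝ))) * rexp (-(x-r)^2/(2*(v:ℝ)))) :=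
          mul_le_mul_of_nonneg_left hexp (by positivity)
      _ = rexp (-r^2/(2*(v:ℝ))) * ((√(2*π*(v:ℝ)))⁻¹ * rexp (-(x-r)^2/(2*(v:ℝ)))) := by ring
  calc ∫⁻ x in Set.Ioi r, gaussianPDF 0 v x
      ≤ ∫⁻ x in Set.Ioi r, ENNReal.ofReal (Real.exp (-r^2/(2*(v:ℝ)))) * gaussianPDF r v x :=
        setLIntegral_mono ((measurable_gaussianPDF r v).const_mul _) hpt
    _ = ENNReal.ofReal (Real.exp (-r^2/(2*(v:ℝ)))) * ∫⁻ x in Set.Ioi r, gaussianPDF r v x := by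
        rw [lintegral_const_mul _ (measurable_gaussianPDF r v)]
    _ = ENNReal.ofReal (Real.exp (-r^2/(2*(v:ℝ)))) * gaussianReal r v (Set.Ioi r) := by
        rw [gaussianReal_apply _ hv]
    _ ≤ ENNReal.ofReal (Real.exp (-r^2/(2*(v:ℝ)))) * (1/2) :=
        mul_le_mul_right (gauss_half v r) _
    _ = ENNReal.ofReal (Real.exp (-r^2/(2*(v:ℝ))) / 2) := by
        rw [ENNReal.ofReal_div_of_pos (by norm_num : (0:ℝ) < 2)]
        norm_num
        rw [ENNReal.div_eq_inv_mul, mul_comm]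

lemma gauss_tail_neg (v : ℝ≥0) (hv : v ≠ 0) {r : ℝ} (hr : r ≤ 0) :
    gaussianReal 0 v (Set.Ioi r) ≤
      ENNReal.ofReal (1/2 + (-r) * (Real.sqrt (2*π*(v:ℝ)))⁻¹) := by
  have hvpos : (0:ℝ) < (v:ℝ) := by
    have h0 : v ≠ 0 := hv
    positivity
  rw [← Set.Ioc_union_Ioi_eq_Ioi hr]
  calc gaussianReal 0 v (Set.Ioc r 0 ∪ Set.Ioi 0)
      ≤ gaussianReal 0 v (Set.Ioc r 0) + gaussianReal 0 v (Set.Ioi 0) := measure_union_le _ _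
    _ ≤ ENNReal.ofReal ((-r) * (Real.sqrt (2*π*(v:ℝ)))⁻¹) + ENNReal.ofReal (1/2) := by
        gcongr
        · rw [gaussianReal_apply _ hv]
          have hpt : ∀ x ∈ Set.Ioc r 0, gaussianPDF 0 v x ≤
              ENNReal.ofReal ((Real.sqrt (2*π*(v:ℝ)))⁻¹) := by
            intro x _
            apply ENNReal.ofReal_le_ofReal
            rw [gaussianPDFReal]
            calc (√(2*π*(v:ℝ)))⁻¹ * rexp (-(x-0)^2/(2*(v:ℝ)))
                ≤ (√(2*π*(v:ℝ)))⁻¹ * 1 :=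
                  mul_le_mul_of_nonneg_left (Real.exp_le_one_iff.2
                    (div_nonpos_of_nonpos_of_nonneg (neg_nonpos.2 (by positivity))
                      (by positivity))) (by positivity)
              _ = (√(2*π*(v:ℝ)))⁻¹ := mul_one _
          calc ∫⁻ x in Set.Ioc r 0, gaussianPDF 0 v x
              ≤ ∫⁻ _ in Set.Ioc r 0, ENNReal.ofReal ((Real.sqrt (2*π*(v:ℝ)))⁻¹) :=
                setLIntegral_mono measurable_const hpt
            _ = ENNReal.ofReal ((Real.sqrt (2*π*(v:ℝ)))⁻¹) * volume (Set.Ioc r 0) := by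
                rw [setLIntegral_const]
            _ = ENNReal.ofReal ((Real.sqrt (2*π*(v:ℝ)))⁻¹) * ENNReal.ofReal (0 - r) := by
                rw [Real.volume_Ioc]
            _ = ENNReal.ofReal ((-r) * (Real.sqrt (2*π*(v:ℝ)))⁻¹) := by
                rw [← ENNReal.ofReal_mul (by positivity)]
                ring_nf
        · calc gaussianReal 0 v (Set.Ioi 0) ≤ 1/2 := gauss_half v 0
            _ = ENNReal.ofReal (1/2) := by
                rw [ENNReal.ofReal_div_of_pos (by norm_num : (0:ℝ) < 2)]
                norm_num
    _ = ENNReal.ofReal (1/2 + (-r) * (Real.sqrt (2*π*(v:ℝ)))⁻¹) := by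
        rw [← ENNReal.ofReal_add (mul_nonneg (neg_nonneg.2 hr) (by positivity)) (by norm_num),
          add_comm]

end DWFL

namespace DWFL

lemma exp_half_le : Real.exp (1/2) ≤ 2.5 := by
  have h := Real.exp_one_lt_d9
  have h2 : Real.exp (1/2) * Real.exp (1/2) = Real.exp 1 := by
    rw [← Real.exp_add]; norm_num
  nlinarith [Real.exp_pos (1/2)]

lemma exp_quarter_le : Real.exp (1/4) ≤ 25/18 := by
  have h := Real.exp_one_lt_d9
  have h2 : Real.exp (1/2) * Real.exp (1/2) = Real.exp 1 := by
    rw [← Real.exp_add]; norm_num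
  have ha : Real.exp (1/2) ≤ 1.65 := by nlinarith [Real.exp_pos (1/2)]
  have hb : Real.exp (1/4) * Real.exp (1/4) = Real.exp (1/2) := by
    rw [← Real.exp_add]; norm_num
  nlinarith [Real.exp_pos (1/4)]

lemma log_125_ge : (1/5 : ℝ) ≤ Real.log 1.25 := by
  rw [Real.le_log_iff_exp_le (by norm_num)]
  have h := Real.add_one_le_exp (-(1/5) : ℝ)
  rw [Real.exp_neg] at h
  have hp := Real.exp_pos (1/5 : ℝ)
  nlinarith [mul_inv_cancel₀ hp.ne']

lemma gauss_tail_delta (v : ℝ≥0) (hv : v ≠ 0) (c ε δ : ℝ) (hc : 0 < c)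
    (hc2 : c^2 = 2 * Real.log (1.25/δ)) (hδ : 0 < δ) (hδ1 : δ < 1)
    (hε : 0 < ε) (hε1 : ε < 1) :
    gaussianReal 0 v (Set.Ioi (Real.sqrt (v:ℝ) * (c - ε/(2*c)))) ≤ ENNReal.ofReal δ := by
  have hvpos : (0:ℝ) < (v:ℝ) := by
    have h0 : v ≠ 0 := hv
    positivity
  set s : ℝ := Real.sqrt (v:ℝ) with hs_def
  have hs : 0 < s := Real.sqrt_pos.2 hvpos
  have hs2 : s^2 = (v:ℝ) := Real.sq_sqrt hvpos.le
  set u : ℝ := c - ε/(2*c) with hu_def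
  have hcu : c * (ε/(2*c)) = ε/2 := by field_simp
  rcases le_or_gt 0 u with hpos | hneg
  · refine le_trans (gauss_tail_nonneg v hv (mul_nonneg hs.le hpos)) ?_
    apply ENNReal.ofReal_le_ofReal
    have h1 : -(s*u)^2/(2*(v:ℝ)) = -u^2/2 := by
      rw [mul_pow, hs2]; field_simp
    rw [h1]
    have h2 : c^2 - ε ≤ u^2 := by
      have hue : u^2 = c^2 - 2*(c*(ε/(2*c))) + (ε/(2*c))^2 := by ring
      rw [hue, hcu]
      nlinarith [sq_nonneg (ε/(2*c))]
    have h3 : -u^2/2 ≤ 1/2 - Real.log (1.25/δ) := by nlinarith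
    have h4 : Real.exp (-u^2/2) ≤ Real.exp (1/2) * (δ/1.25) := by
      calc Real.exp (-u^2/2) ≤ Real.exp (1/2 - Real.log (1.25/δ)) := Real.exp_le_exp.2 h3
        _ = Real.exp (1/2) * Real.exp (-Real.log (1.25/δ)) := by rw [← Real.exp_add]; ring_nf
        _ = Real.exp (1/2) * (δ/1.25) := by
            rw [Real.exp_neg, Real.exp_log (by positivity), inv_div]
    have h5 : Real.exp (1/2) * (δ/1.25) ≤ 2.5 * (δ/1.25) :=
      mul_le_mul_of_nonneg_right exp_half_le (by positivity)
    have h6 : (2.5:ℝ) * (δ/1.25) = 2*δ := by norm_num; ring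
    linarith
  · refine le_trans (gauss_tail_neg v hv (mul_nonpos_of_nonneg_of_nonpos hs.le hneg.le)) ?_
    apply ENNReal.ofReal_le_ofReal
    have hsq : Real.sqrt (2*π*(v:ℝ)) = Real.sqrt (2*π) * s := by
      rw [hs_def, ← Real.sqrt_mul (by positivity)]
    have hsqpi : (5/2 : ℝ) ≤ Real.sqrt (2*π) := by
      rw [show (5/2:ℝ) = Real.sqrt ((5/2)^2) from (Real.sqrt_sq (by norm_num)).symm]
      apply Real.sqrt_le_sqrt
      nlinarith [Real.pi_gt_d6]
    have hterm : (-(s*u)) * (Real.sqrt (2*π*(v:ℝ)))⁻¹ = (-u) * (Real.sqrt (2*π))⁻¹ := by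
      rw [hsq, mul_inv]
      have hpi : (0:ℝ) < Real.sqrt (2*π) := by linarith
      field_simp
    rw [hterm]
    have hc2' : (2/5 : ℝ) ≤ c^2 := by
      rw [hc2]
      have hll : Real.log 1.25 ≤ Real.log (1.25/δ) :=
        Real.log_le_log (by norm_num) (by rw [le_div_iff₀ hδ]; nlinarith)
      linarith [log_125_ge]
    have hcge : (3/5 : ℝ) ≤ c := by nlinarith
    have hnu : 0 < -u := neg_pos.2 hneg
    have h2cε : 2*c^2 < ε := by
      have h1 : c < ε/(2*c) := by linarith [sub_neg.1 hneg]
      rw [lt_div_iff₀ (by positivity)] at h1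
      linarith
    have hnu4 : -u ≤ 1/4 := by
      have h1 : -u = ε/(2*c) - c := by rw [hu_def]; ring
      have hq : (ε/(2*c)) * (2*c) = ε := by field_simp
      nlinarith [hq, hcge, hε1]
    have hδ9 : (9/10 : ℝ) ≤ δ := by
      have hL : Real.log (1.25/δ) < 1/4 := by linarith
      have hL2 : (1.25:ℝ)/δ < 25/18 := by
        calc (1.25:ℝ)/δ = Real.exp (Real.log (1.25/δ)) := (Real.exp_log (by positivity)).symm
          _ < Real.exp (1/4) := Real.exp_lt_exp.2 hL
          _ ≤ 25/18 := exp_quarter_le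
      rw [div_lt_iff₀ hδ] at hL2
      linarith
    have hinv : (Real.sqrt (2*π))⁻¹ ≤ 2/5 := by
      rw [show (2/5:ℝ) = (5/2:ℝ)⁻¹ by norm_num]
      exact inv_anti₀ (by norm_num) hsqpi
    have : (-u) * (Real.sqrt (2*π))⁻¹ ≤ (1/4) * (2/5) :=
      mul_le_mul hnu4 hinv (by positivity) (by norm_num)
    linarith

end DWFL


open DWFL

lemma s0_le (s c εi Δ a t : ℝ) (hs : 0 < s) (hc : 0 < c) (ha : 0 < a) (haΔ : a ≤ Δ)
    (hsw : s * (εi/(2*c)) = Δ/2) (ht : t = s*c*Δ - a^2/2) :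
    s * (c - εi/(2*c)) * a ≤ t := by
  nlinarith [mul_nonneg (mul_nonneg hs.le hc.le) (sub_nonneg.2 haΔ),
    mul_nonneg ha.le (sub_nonneg.2 haΔ)]

/-- **(ε_i, δ)-differential privacy of the aggregated signal in DWFL (Theorem 1).**
With sensitivity `Δ = 2γ g_max √(min_j |h_j|² P_j)` and total Gaussian noise variance
`σ_s² = Σ_{k≠i} |h_k|² β_k P_k σ² + σ_m²`, if the resulting
`ε_i = (Δ/σ_s)·√(2 ln(1.25/δ))` lies in `(0,1)`, then the Gaussian-perturbed aggregate
received by worker `i` is `(ε_i, δ)`-differentially private. -/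
theorem dwfl_privacy (N : ℕ) (hN : 2 ≤ N) (i : Fin N)
    (γ gmax : ℝ) (hγ : 0 < γ) (hgmax : 0 < gmax)
    (habs P β : Fin N → ℝ)
    (hh : ∀ k, 0 < habs k) (hP : ∀ k, 0 < P k) (hβ : ∀ k, 0 ≤ β k)
    (σ σm δ : ℝ) (hσ : 0 < σ) (hσm : 0 ≤ σm) (hδ : δ ∈ Set.Ioo (0 : ℝ) 1) :
    let Δ : ℝ := 2 * γ * gmax *
      Real.sqrt (Finset.univ.inf' ⟨i, Finset.mem_univ i⟩ fun j => (habs j) ^ 2 * P j)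
    let σs2 : ℝ := (∑ k ∈ Finset.univ.erase i, (habs k) ^ 2 * β k * P k * σ ^ 2) + σm ^ 2
    let εi : ℝ := (Δ / Real.sqrt σs2) * Real.sqrt (2 * Real.log (1.25 / δ))
    0 < εi → εi < 1 →
      ∀ y y' : ℝ, |y - y'| ≤ Δ → ∀ S : Set ℝ, MeasurableSet S →
        gaussianReal y (Real.toNNReal σs2) S ≤
          ENNReal.ofReal (Real.exp εi) * gaussianReal y' (Real.toNNReal σs2) S
            + ENNReal.ofReal δ := by
  intro Δ σs2 εi hε hε1 y y' hyy' S hS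
  -- basic positivity facts
  have hΔ : 0 < Δ := by
    have hinf : 0 < Finset.univ.inf' ⟨i, Finset.mem_univ i⟩ fun j => (habs j) ^ 2 * P j := by
      refine (Finset.lt_inf'_iff _).2 ?_
      exact fun j _ => mul_pos (pow_pos (hh j) 2) (hP j)
    have hsq := Real.sqrt_pos.2 hinf
    show 0 < 2 * γ * gmax * Real.sqrt _
    positivity
  have hσs2nn : 0 ≤ σs2 :=
    add_nonneg (Finset.sum_nonneg fun k _ =>
      mul_nonneg (mul_nonneg (mul_nonneg (sq_nonneg _) (hβ k)) (hP k).le) (sq_nonneg _))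
      (sq_nonneg _)
  have hεdef0 : εi = Δ / Real.sqrt σs2 * Real.sqrt (2 * Real.log (1.25 / δ)) := rfl
  clear_value Δ σs2 εi
  clear hN hγ hgmax hh hP hβ hσ hσm
  have hlogpos : 0 < Real.log (1.25/δ) :=
    Real.log_pos (by rw [lt_div_iff₀ hδ.1]; linarith [hδ.2])
  set c : ℝ := Real.sqrt (2 * Real.log (1.25/δ)) with hc_def
  have hcpos : 0 < c := Real.sqrt_pos.2 (by linarith)
  have hcsq : c^2 = 2 * Real.log (1.25/δ) := Real.sq_sqrt (by linarith)
  set s : ℝ := Real.sqrt σs2 with hs_def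
  have hεdef : εi = Δ / s * c := hεdef0
  have hspos : 0 < s := by
    rcases lt_or_eq_of_le (Real.sqrt_nonneg σs2) with h | h
    · exact h
    · exfalso
      have h0 : εi = 0 := by rw [hεdef, show s = 0 from h.symm, div_zero, zero_mul]
      exact absurd (h0 ▸ hε) (lt_irrefl 0)
  have hσpos : 0 < σs2 := Real.sqrt_pos.1 hspos
  set v : ℝ≥0 := Real.toNNReal σs2 with hv_def
  have hv : v ≠ 0 := (Real.toNNReal_pos.2 hσpos).ne'
  have hvcoe : ((v : ℝ≥0) : ℝ) = σs2 := Real.coe_toNNReal _ hσs2nn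
  have hsv : Real.sqrt (v:ℝ) = s := by rw [hvcoe]
  have hΔc : Δ * c = εi * s := by
    rw [hεdef]; field_simp
  have hs2' : s^2 = σs2 := Real.sq_sqrt hσs2nn
  set d : ℝ := y - y' with hd_def
  set t : ℝ := σs2 * εi - d^2/2 with ht_def
  set B : Set ℝ := {x | t < d * (x - y)} with hB_def
  have hBmeas : MeasurableSet B :=
    measurableSet_lt measurable_const (by fun_prop)
  clear_value B t d s c
  -- split
  have hsplit : gaussianReal y v S ≤ gaussianReal y v (S ∩ Bᶜ) + gaussianReal y v B := by
    refine le_trans (measure_mono (fun x hx => ?_)) (measure_union_le _ _)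
    by_cases hxB : x ∈ B
    · exact Or.inr hxB
    · exact Or.inl ⟨hx, hxB⟩
  -- main part
  have hmain : gaussianReal y v (S ∩ Bᶜ) ≤ ENNReal.ofReal (Real.exp εi) * gaussianReal y' v S := by
    rw [gaussianReal_apply _ hv, gaussianReal_apply _ hv]
    have hpt : ∀ x ∈ S ∩ Bᶜ, gaussianPDF y v x ≤
        ENNReal.ofReal (Real.exp εi) * gaussianPDF y' v x := by
      intro x hx
      have hxB : d * (x - y) ≤ t := by
        have h := hx.2
        rw [hB_def] at h
        exact not_lt.1 h
      rw [gaussianPDF, gaussianPDF, ← ENNReal.ofReal_mul (Real.exp_nonneg _)]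
      apply ENNReal.ofReal_le_ofReal
      rw [gaussianPDFReal, gaussianPDFReal]
      have hexp : rexp (-(x-y)^2/(2*(v:ℝ))) ≤ rexp εi * rexp (-(x-y')^2/(2*(v:ℝ))) := by
        rw [← Real.exp_add]
        apply Real.exp_le_exp.2
        rw [hvcoe]
        have hsq : (x - y')^2 = ((x - y) + d)^2 := by rw [hd_def]; ring_nf
        have key : (x - y')^2 - (x - y)^2 ≤ εi * (2*σs2) := by
          nlinarith [hxB, ht_def, hsq]
        have h2σ : (0:ℝ) < 2*σs2 := by linarith
        calc -(x-y)^2/(2*σs2)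
            = (-(x-y')^2 + ((x - y')^2 - (x - y)^2))/(2*σs2) := by ring
          _ ≤ (-(x-y')^2 + εi * (2*σs2))/(2*σs2) :=
              (div_le_div_iff_of_pos_right h2σ).2 (by linarith)
          _ = εi + -(x-y')^2/(2*σs2) := by field_simp; ring
      calc (√(2*π*(v:ℝ)))⁻¹ * rexp (-(x-y)^2/(2*(v:ℝ)))
          ≤ (√(2*π*(v:ℝ)))⁻¹ * (rexp εi * rexp (-(x-y')^2/(2*(v:ℝ)))) :=
            mul_le_mul_of_nonneg_left hexp (by positivity)
        _ = rexp εi * ((√(2*π*(v:ℝ)))⁻¹ * rexp (-(x-y')^2/(2*(v:ℝ)))) := by ring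
    calc ∫⁻ x in S ∩ Bᶜ, gaussianPDF y v x
        ≤ ∫⁻ x in S ∩ Bᶜ, ENNReal.ofReal (Real.exp εi) * gaussianPDF y' v x :=
          setLIntegral_mono ((measurable_gaussianPDF y' v).const_mul _) hpt
      _ = ENNReal.ofReal (Real.exp εi) * ∫⁻ x in S ∩ Bᶜ, gaussianPDF y' v x := by
          rw [lintegral_const_mul _ (measurable_gaussianPDF y' v)]
      _ ≤ ENNReal.ofReal (Real.exp εi) * ∫⁻ x in S, gaussianPDF y' v x :=
          mul_le_mul_right (lintegral_mono_set Set.inter_subset_left) _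
  -- tail part
  have htail : gaussianReal y v B ≤ ENNReal.ofReal δ := by
    by_cases hd0 : d = 0
    · have hBempty : B = ∅ := by
        ext x
        simp only [hB_def, Set.mem_setOf_eq, Set.mem_empty_iff_false, iff_false, not_lt,
          hd0, zero_mul]
        rw [ht_def, hd0]
        nlinarith [mul_pos hσpos hε]
      rw [hBempty]
      simp
    · have hmap : (gaussianReal 0 v).map (· + y) = gaussianReal y v := by
        rw [gaussianReal_map_add_const, zero_add]
      have hBpre : gaussianReal y v B = gaussianReal 0 v {z : ℝ | t < d * z} := by
        rw [← hmap, Measure.map_apply (measurable_add_const y) hBmeas]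
        congr 1
        ext z
        simp only [hB_def, Set.mem_preimage, Set.mem_setOf_eq, add_sub_cancel_right]
      have habs_d : 0 < |d| := abs_pos.2 hd0
      have hkey : gaussianReal 0 v {z : ℝ | t < d * z} =
          gaussianReal 0 v (Set.Ioi (t/|d|)) := by
        rcases lt_or_gt_of_ne hd0 with hdneg | hdpos
        · have h1 : {z : ℝ | t < d * z} = Set.Iio (t/d) := by
            ext z
            simp only [Set.mem_setOf_eq, Set.mem_Iio]
            rw [lt_div_iff_of_neg hdneg, mul_comm]
          rw [h1]
          calc gaussianReal 0 v (Set.Iio (t/d))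
              = (gaussianReal 0 v).map (fun x : ℝ => -x) (Set.Iio (t/d)) := by
                rw [gauss_neg_map]
            _ = gaussianReal 0 v ((fun x : ℝ => -x) ⁻¹' Set.Iio (t/d)) :=
                Measure.map_apply measurable_neg measurableSet_Iio
            _ = gaussianReal 0 v (Set.Ioi (t/|d|)) := by
                congr 1
                ext x
                simp only [Set.mem_preimage, Set.mem_Iio, Set.mem_Ioi]
                rw [abs_of_neg hdneg, div_neg]
                constructor <;> intro <;> linarith
        · have h1 : {z : ℝ | t < d * z} = Set.Ioi (t/d) := by
            ext z
            simp only [Set.mem_setOf_eq, Set.mem_Ioi]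
            rw [div_lt_iff₀ hdpos, mul_comm]
          rw [h1, abs_of_pos hdpos]
      rw [hBpre, hkey]
      have hd_le : |d| ≤ Δ := hyy'
      have hs0le : s * (c - εi/(2*c)) ≤ t/|d| := by
        rw [le_div_iff₀ habs_d]
        have hscΔ : s * c * Δ = s^2 * εi := by linear_combination s * hΔc
        have hsw : s * (εi/(2*c)) = Δ/2 := by
          rw [hεdef]
          field_simp
        have ht2 : t = s*c*Δ - |d|^2/2 := by
          rw [ht_def, ← hs2', ← hscΔ, sq_abs]
        exact s0_le s c εi Δ |d| t hspos hcpos habs_d hd_le hsw ht2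
      calc gaussianReal 0 v (Set.Ioi (t/|d|))
          ≤ gaussianReal 0 v (Set.Ioi (s * (c - εi/(2*c)))) :=
            measure_mono (Set.Ioi_subset_Ioi hs0le)
        _ ≤ ENNReal.ofReal δ := by
            have h := gauss_tail_delta v hv c εi δ hcpos hcsq hδ.1 hδ.2 hε hε1
            rwa [hsv] at h
  calc gaussianReal y v S ≤ gaussianReal y v (S ∩ Bᶜ) + gaussianReal y v B := hsplit
    _ ≤ ENNReal.ofReal (Real.exp εi) * gaussianReal y' v S + ENNReal.ofReal δ :=
        add_le_add hmain htail
end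

section
/- Fix N ≥ 2, a worker index i and a worker index j ≠ i, γ > 0, g_max ≥ 0, channel gains |h_1|,…,|h_N| > 0 and powers P_1,…,P_N > 0, and set c = √(min_j |h_j|²P_j). Let u_1,…,u_N ∈ ℝ^d and let g_j, g_j' ∈ ℝ^d satisfy ‖g_j‖ ≤ g_max and ‖g_j'‖ ≤ g_max. Define x_k = u_k − γ g_k for all k (with arbitrary fixed g_k of norm at most g_max for k ≠ j), and define x_k' identically except that worker j uses g_j' in place of g_j. Then ‖c·Σ_{k≠i} x_k − c·Σ_{k≠i} x_k'‖ ≤ 2γ·g_max·√(min_j |h_j|²P_j). -/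
open Finset

/-- **L2-sensitivity of the aggregated query in DWFL.** If worker `j ≠ i` changes its local
dataset (hence its clipped stochastic gradient `g j` changes to `gj'`, both of norm at most
`g_max`), the aggregate `c·Σ_{k≠i} x_k` with `c = √(min_j |h_j|² P_j)` changes by at most
`2γ·g_max·√(min_j |h_j|² P_j)`. -/
theorem dwfl_sensitivity {d : ℕ} (N : ℕ) (hN : 2 ≤ N) (i j : Fin N) (hij : j ≠ i)
    (γ gmax : ℝ) (hγ : 0 < γ) (hgmax : 0 ≤ gmax)
    (habs P : Fin N → ℝ) (hh : ∀ k, 0 < habs k) (hP : ∀ k, 0 < P k)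
    (u : Fin N → EuclideanSpace ℝ (Fin d))
    (g : Fin N → EuclideanSpace ℝ (Fin d)) (gj' : EuclideanSpace ℝ (Fin d))
    (hg : ∀ k, ‖g k‖ ≤ gmax) (hgj' : ‖gj'‖ ≤ gmax)
    (x x' : Fin N → EuclideanSpace ℝ (Fin d))
    (hx : ∀ k, x k = u k - γ • g k)
    (hx' : ∀ k, x' k = u k - γ • (Function.update g j gj') k) :
    let c : ℝ := Real.sqrt (Finset.univ.inf' ⟨i, Finset.mem_univ i⟩ fun k => (habs k) ^ 2 * P k)
    ‖(c • ∑ k ∈ Finset.univ.erase i, x k) - (c • ∑ k ∈ Finset.univ.erase i, x' k)‖ ≤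
      2 * γ * gmax *
        Real.sqrt (Finset.univ.inf' ⟨i, Finset.mem_univ i⟩ fun k => (habs k) ^ 2 * P k) := by
  intro c
  have hc : 0 ≤ c := Real.sqrt_nonneg _
  have hj : j ∈ Finset.univ.erase i := Finset.mem_erase.2 ⟨hij, Finset.mem_univ j⟩
  have hdiff : (∑ k ∈ Finset.univ.erase i, x k) - (∑ k ∈ Finset.univ.erase i, x' k)
      = γ • (gj' - g j) := by
    rw [← Finset.sum_sub_distrib]
    rw [Finset.sum_eq_single_of_mem j hj]
    · rw [hx, hx', Function.update_self]
      module
    · intro k _ hkj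
      rw [hx, hx', Function.update_of_ne hkj]
      abel
  rw [← smul_sub, hdiff]
  have hnorm : ‖gj' - g j‖ ≤ 2 * gmax := by
    calc ‖gj' - g j‖ ≤ ‖gj'‖ + ‖g j‖ := norm_sub_le _ _
    _ ≤ gmax + gmax := add_le_add hgj' (hg j)
    _ = 2 * gmax := by ring
  rw [norm_smul, norm_smul, Real.norm_eq_abs, Real.norm_eq_abs, abs_of_nonneg hc,
    abs_of_nonneg hγ.le]
  calc c * (γ * ‖gj' - g j‖) ≤ c * (γ * (2 * gmax)) := by
        apply mul_le_mul_of_nonneg_left (mul_le_mul_of_nonneg_left hnorm hγ.le) hc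
  _ = 2 * γ * gmax * c := by ring
end

section
/- Let N ≥ 2, d ≥ 1, γ, η ∈ ℝ, and let X, G, Φ ∈ ℝ^{d×N}. Let J ∈ ℝ^{N×N} be the all-ones matrix, W = (J − I)/(N−1), Ψ = (1−η)I + ηW, and let A = (1/N, …, 1/N)ᵀ ∈ ℝ^N. Then ((X − γG)Ψ + Φ(Ψ − I))·A = (X − γG)·A. In particular, if x̄ denotes the average of the columns of X and Ḡ the average of the columns of G, the average of the columns of the updated matrix X⁺ = (X − γG)Ψ + Φ(Ψ − I) equals x̄ − γḠ; i.e., from a global view the DWFL update is exactly a gradient-descent step on the column average, unaffected by the perturbation Φ. -/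
open Finset Matrix

/-- **The DWFL update is exact gradient descent on the column average.** Multiplying the
global update `X⁺ = (X − γG)Ψ + Φ(Ψ − I)` by the averaging vector `A = (1/N,…,1/N)ᵀ`
gives `(X − γG)·A`; in particular the average of the updated columns is `x̄ − γḠ`,
unaffected by the perturbation `Φ`. -/
theorem dwfl_average_update (N d : ℕ) (hN : 2 ≤ N) (hd : 1 ≤ d) (γ η : ℝ)
    (X G Φ : Matrix (Fin d) (Fin N) ℝ)
    (J W Ψ : Matrix (Fin N) (Fin N) ℝ)
    (hJ : J = Matrix.of fun _ _ => (1 : ℝ))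
    (hW : W = ((N : ℝ) - 1)⁻¹ • (J - 1))
    (hΨ : Ψ = (1 - η) • (1 : Matrix (Fin N) (Fin N) ℝ) + η • W)
    (A : Fin N → ℝ) (hA : A = fun _ => 1 / (N : ℝ)) :
    ((X - γ • G) * Ψ + Φ * (Ψ - 1)) *ᵥ A = (X - γ • G) *ᵥ A ∧
    ((X - γ • G) * Ψ + Φ * (Ψ - 1)) *ᵥ A =
      fun r => (1 / (N : ℝ)) * (∑ i, X r i) - γ * ((1 / (N : ℝ)) * ∑ i, G r i) := by
  have hN0 : (N : ℝ) ≠ 0 := by positivity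
  have hN1 : (N : ℝ) - 1 ≠ 0 := by
    have : (2 : ℝ) ≤ N := by exact_mod_cast hN
    intro h; nlinarith
  have hJA : J *ᵥ A = fun _ => 1 := by
    funext i
    simp [hJ, hA, mulVec, dotProduct, Finset.sum_const, mul_comm, hN0]
  have hWA : W *ᵥ A = A := by
    rw [hW, smul_mulVec, sub_mulVec, hJA, one_mulVec]
    funext i
    simp only [hA, Pi.smul_apply, Pi.sub_apply, smul_eq_mul]
    field_simp
  have hΨA : Ψ *ᵥ A = A := by
    rw [hΨ, add_mulVec, smul_mulVec, smul_mulVec, one_mulVec, hWA]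
    funext i
    simp only [Pi.add_apply, Pi.smul_apply, smul_eq_mul]
    ring
  have h1 : ((X - γ • G) * Ψ + Φ * (Ψ - 1)) *ᵥ A = (X - γ • G) *ᵥ A := by
    have h2 : (Ψ - 1) *ᵥ A = 0 := by rw [sub_mulVec, hΨA, one_mulVec, sub_self]
    rw [add_mulVec, ← mulVec_mulVec, hΨA, ← mulVec_mulVec, h2, mulVec_zero, add_zero]
  refine ⟨h1, h1.trans ?_⟩
  funext r
  simp only [sub_mulVec, smul_mulVec, Pi.sub_apply, Pi.smul_apply, smul_eq_mul,
    mulVec, dotProduct, hA, Matrix.sub_apply, Matrix.smul_apply, sub_mul,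
    Finset.sum_sub_distrib, Finset.mul_sum]
  ring_nf
  rw [Finset.sum_congr rfl (fun x _ => mul_comm (X r x) ((N:ℝ))⁻¹)]
  ring
end

section
/- Let N, d, T ≥ 1 and m ≥ 1 be integers. Let Ψ ∈ ℝ^{N×N} be a symmetric doubly stochastic matrix all of whose eigenvalues lie in [0,1], and let λ_N denote its smallest eigenvalue. Then for any matrices M_0, …, M_{T−1} ∈ ℝ^{d×N}: Σ_{t=0}^{T−1} ‖ Σ_{s=0}^{t} M_s (Ψ − I)^m Ψ^{t−s} ‖_F² ≤ (1 − λ_N)^{2m−2} · Σ_{t=0}^{T−1} ‖M_t‖_F². -/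
open Finset Matrix

/-- Squared Frobenius norm of a real matrix. -/
def frobSq {d N : ℕ} (M : Matrix (Fin d) (Fin N) ℝ) : ℝ :=
  ∑ r, ∑ c, (M r c) ^ 2

lemma frobSq_eq_trace {d N : ℕ} (M : Matrix (Fin d) (Fin N) ℝ) :
    frobSq M = Matrix.trace (M * Mᵀ) := by
  simp [frobSq, Matrix.trace, Matrix.mul_apply, Matrix.diag, sq]

lemma frobSq_mul_orth {d N : ℕ} (M : Matrix (Fin d) (Fin N) ℝ)
    (U : Matrix (Fin N) (Fin N) ℝ) (hU : U * Uᵀ = 1) :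
    frobSq (M * U) = frobSq M := by
  rw [frobSq_eq_trace, frobSq_eq_trace, transpose_mul, Matrix.mul_assoc,
    ← Matrix.mul_assoc U, hU, Matrix.one_mul]

lemma myConjMul {N : ℕ} (U A B : Matrix (Fin N) (Fin N) ℝ)
    (hU : star U * U = 1) :
    (U * A * star U) * (U * B * star U) = U * (A * B) * star U := by
  rw [show (U * A * star U) * (U * B * star U) = U * (A * ((star U * U) * B)) * star U by
    noncomm_ring, hU]
  noncomm_ring

lemma myConjPow {N : ℕ} (U : Matrix (Fin N) (Fin N) ℝ) (f : Fin N → ℝ)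
    (hU1 : U * star U = 1) (hU2 : star U * U = 1) (k : ℕ) :
    (U * diagonal f * star U) ^ k = U * diagonal (fun i => f i ^ k) * star U := by
  induction k with
  | zero => simp [hU1]
  | succ k ih =>
      rw [pow_succ, ih, myConjMul _ _ _ hU2, diagonal_mul_diagonal]
      congr 2

lemma geom_bound (lam : ℝ) (h0 : 0 ≤ lam) (h1 : lam ≤ 1) (m : ℕ) (hm : 1 ≤ m) (n : ℕ) :
    ∑ k ∈ Finset.range n, (1 - lam) ^ m * lam ^ k ≤ (1 - lam) ^ (m - 1) := by
  have key : (1 - lam) * ∑ k ∈ Finset.range n, lam ^ k = 1 - lam ^ n := by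
    have h := geom_sum_mul lam n
    nlinarith [h]
  have hpow : (1 - lam) ^ m = (1 - lam) ^ (m - 1) * (1 - lam) := by
    rw [← pow_succ, Nat.sub_add_cancel hm]
  calc ∑ k ∈ Finset.range n, (1 - lam) ^ m * lam ^ k
      = (1 - lam) ^ (m - 1) * ((1 - lam) * ∑ k ∈ Finset.range n, lam ^ k) := by
        rw [← Finset.mul_sum, hpow]; ring
    _ = (1 - lam) ^ (m - 1) * (1 - lam ^ n) := by rw [key]
    _ ≤ (1 - lam) ^ (m - 1) * 1 := by
        apply mul_le_mul_of_nonneg_left _ (pow_nonneg (by linarith) _)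
        nlinarith [pow_nonneg h0 n]
    _ = (1 - lam) ^ (m - 1) := mul_one _

lemma conv_bound (T : ℕ) (a y : ℕ → ℝ) (ha : ∀ k, 0 ≤ a k) (A : ℝ)
    (hA : ∀ n, ∑ k ∈ Finset.range n, a k ≤ A) :
    ∑ t ∈ Finset.range T, (∑ s ∈ Finset.range (t + 1), y s * a (t - s)) ^ 2
      ≤ A ^ 2 * ∑ t ∈ Finset.range T, y t ^ 2 := by
  have hA0 : 0 ≤ A := le_trans (by simp) (hA 0)
  have hsum_a : ∀ t : ℕ, ∑ s ∈ Finset.range (t + 1), a (t - s) ≤ A := by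
    intro t
    have := Finset.sum_range_reflect a (t + 1)
    have h2 : ∑ s ∈ Finset.range (t + 1), a (t - s) = ∑ s ∈ Finset.range (t + 1), a s := by
      rw [← this]; apply Finset.sum_congr rfl; intro s hs; congr 1
    rw [h2]; exact hA _
  have step1 : ∀ t, (∑ s ∈ Finset.range (t + 1), y s * a (t - s)) ^ 2
      ≤ A * ∑ s ∈ Finset.range (t + 1), y s ^ 2 * a (t - s) := by
    intro t
    have cs := Finset.sum_mul_sq_le_sq_mul_sq (Finset.range (t + 1))
      (fun s => Real.sqrt (a (t - s))) (fun s => Real.sqrt (a (t - s)) * y s)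
    have e1 : ∑ s ∈ Finset.range (t + 1),
        Real.sqrt (a (t - s)) * (Real.sqrt (a (t - s)) * y s)
        = ∑ s ∈ Finset.range (t + 1), y s * a (t - s) := by
      apply Finset.sum_congr rfl; intro s _
      rw [← mul_assoc, Real.mul_self_sqrt (ha _)]; ring
    have e2 : ∑ s ∈ Finset.range (t + 1), (Real.sqrt (a (t - s))) ^ 2
        = ∑ s ∈ Finset.range (t + 1), a (t - s) := by
      apply Finset.sum_congr rfl; intro s _; exact Real.sq_sqrt (ha _)
    have e3 : ∑ s ∈ Finset.range (t + 1), (Real.sqrt (a (t - s)) * y s) ^ 2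
        = ∑ s ∈ Finset.range (t + 1), y s ^ 2 * a (t - s) := by
      apply Finset.sum_congr rfl; intro s _
      rw [mul_pow, Real.sq_sqrt (ha _)]; ring
    rw [e1, e2, e3] at cs
    calc (∑ s ∈ Finset.range (t + 1), y s * a (t - s)) ^ 2
        ≤ (∑ s ∈ Finset.range (t + 1), a (t - s))
            * ∑ s ∈ Finset.range (t + 1), y s ^ 2 * a (t - s) := cs
      _ ≤ A * ∑ s ∈ Finset.range (t + 1), y s ^ 2 * a (t - s) := by
          apply mul_le_mul_of_nonneg_right (hsum_a t)
          exact Finset.sum_nonneg fun s _ => mul_nonneg (sq_nonneg _) (ha _)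
  have step2 : ∑ t ∈ Finset.range T, ∑ s ∈ Finset.range (t + 1), y s ^ 2 * a (t - s)
      ≤ A * ∑ t ∈ Finset.range T, y t ^ 2 := by
    have swap : ∑ t ∈ Finset.range T, ∑ s ∈ Finset.range (t + 1), y s ^ 2 * a (t - s)
        = ∑ s ∈ Finset.range T, ∑ t ∈ Finset.Ico s T, y s ^ 2 * a (t - s) := by
      have := Finset.sum_Ico_Ico_comm 0 T (fun s t => y s ^ 2 * a (t - s))
      simp only [Nat.Ico_zero_eq_range] at this
      exact this.symm
    rw [swap]
    calc ∑ s ∈ Finset.range T, ∑ t ∈ Finset.Ico s T, y s ^ 2 * a (t - s)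
        = ∑ s ∈ Finset.range T, y s ^ 2 * ∑ t ∈ Finset.Ico s T, a (t - s) := by
          apply Finset.sum_congr rfl; intro s _; rw [Finset.mul_sum]
      _ ≤ ∑ s ∈ Finset.range T, y s ^ 2 * A := by
          apply Finset.sum_le_sum; intro s _
          apply mul_le_mul_of_nonneg_left _ (sq_nonneg _)
          rw [Finset.sum_Ico_eq_sum_range]
          calc ∑ k ∈ Finset.range (T - s), a (s + k - s)
              = ∑ k ∈ Finset.range (T - s), a k := by
                apply Finset.sum_congr rfl; intro k _; congr 1; omega
            _ ≤ A := hA _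
      _ = A * ∑ t ∈ Finset.range T, y t ^ 2 := by rw [← Finset.sum_mul]; ring
  calc ∑ t ∈ Finset.range T, (∑ s ∈ Finset.range (t + 1), y s * a (t - s)) ^ 2
      ≤ ∑ t ∈ Finset.range T, A * ∑ s ∈ Finset.range (t + 1), y s ^ 2 * a (t - s) := by
        apply Finset.sum_le_sum; intro t _; exact step1 t
    _ = A * ∑ t ∈ Finset.range T, ∑ s ∈ Finset.range (t + 1), y s ^ 2 * a (t - s) := by
        rw [Finset.mul_sum]
    _ ≤ A * (A * ∑ t ∈ Finset.range T, y t ^ 2) := mul_le_mul_of_nonneg_left step2 hA0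
    _ = A ^ 2 * ∑ t ∈ Finset.range T, y t ^ 2 := by ring

/-- **Lemma 3 (matrix sequence inequality).** For a symmetric doubly stochastic matrix `Ψ`
with all eigenvalues in `[0,1]` and smallest eigenvalue `λ_N`, and any matrices
`M_0, …, M_{T−1}`:
`Σ_t ‖Σ_{s≤t} M_s (Ψ−I)^m Ψ^{t−s}‖_F² ≤ (1−λ_N)^{2m−2} Σ_t ‖M_t‖_F²`. -/
theorem matrix_sequence_bound_one (N d T m : ℕ)
    (hN : 1 ≤ N) (hd : 1 ≤ d) (hT : 1 ≤ T) (hm : 1 ≤ m)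
    (Ψ : Matrix (Fin N) (Fin N) ℝ) (hsymm : Ψ.IsSymm)
    (hnonneg : ∀ i j, 0 ≤ Ψ i j)
    (hrow : ∀ i, ∑ j, Ψ i j = 1) (hcol : ∀ j, ∑ i, Ψ i j = 1)
    (heig : ∀ μ : ℝ, Module.End.HasEigenvalue (Matrix.toLin' Ψ) μ → μ ∈ Set.Icc (0 : ℝ) 1)
    (lamN : ℝ) (hlamN : Module.End.HasEigenvalue (Matrix.toLin' Ψ) lamN)
    (hlamN_min : ∀ μ : ℝ, Module.End.HasEigenvalue (Matrix.toLin' Ψ) μ → lamN ≤ μ)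
    (M : ℕ → Matrix (Fin d) (Fin N) ℝ) :
    ∑ t ∈ Finset.range T,
        frobSq (∑ s ∈ Finset.range (t + 1), M s * (Ψ - 1) ^ m * Ψ ^ (t - s)) ≤
      (1 - lamN) ^ (2 * m - 2) * ∑ t ∈ Finset.range T, frobSq (M t) := by
  have hH : Ψ.IsHermitian := by
    rw [Matrix.IsHermitian, conjTranspose_eq_transpose_of_trivial]; exact hsymm
  set U : Matrix (Fin N) (Fin N) ℝ := (hH.eigenvectorUnitary : Matrix (Fin N) (Fin N) ℝ)
    with hUdef
  set ev : Fin N → ℝ := hH.eigenvalues with hevdef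
  have hU1 : U * star U = 1 := Unitary.coe_mul_star_self _
  have hU2 : star U * U = 1 := Unitary.coe_star_mul_self _
  have hst : star U = Uᵀ := by
    rw [Matrix.star_eq_conjTranspose, conjTranspose_eq_transpose_of_trivial]
  have hUUt : U * Uᵀ = 1 := by rw [← hst]; exact hU1
  -- eigenvalue facts
  have heigen : ∀ i : Fin N, Module.End.HasEigenvalue (Matrix.toLin' Ψ) (ev i) := by
    intro i
    apply Module.End.hasEigenvalue_of_hasEigenvector (x := ⇑(hH.eigenvectorBasis i))
    constructor
    · rw [Module.End.mem_eigenspace_iff, Matrix.toLin'_apply]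
      exact hH.mulVec_eigenvectorBasis i
    · intro h
      exact hH.eigenvectorBasis.orthonormal.ne_zero i (by ext j; exact congrFun h j)
  have hev0 : ∀ i, 0 ≤ ev i := fun i => (heig _ (heigen i)).1
  have hev1 : ∀ i, ev i ≤ 1 := fun i => (heig _ (heigen i)).2
  have hlam_le : ∀ i, lamN ≤ ev i := fun i => hlamN_min _ (heigen i)
  -- spectral theorem
  have hPsi : Ψ = U * diagonal ev * star U := by
    have := hH.spectral_theorem
    simpa using this
  have hsub : Ψ - 1 = U * diagonal (fun i => ev i - 1) * star U := by
    have hd1 : diagonal (fun i => ev i - 1) = diagonal ev - 1 := by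
      ext i j
      by_cases h : i = j <;> simp [Matrix.diagonal_apply, Matrix.one_apply, h]
    rw [hd1, Matrix.mul_sub, Matrix.mul_one, Matrix.sub_mul, hU1, ← hPsi]
  have hsubpow : (Ψ - 1) ^ m = U * diagonal (fun i => (ev i - 1) ^ m) * star U := by
    rw [hsub, myConjPow _ _ hU1 hU2]
  have hpowk : ∀ k : ℕ, Ψ ^ k = U * diagonal (fun i => ev i ^ k) * star U := by
    intro k
    conv_lhs => rw [hPsi]
    rw [myConjPow _ _ hU1 hU2]
  have hkey : ∀ k : ℕ, (Ψ - 1) ^ m * Ψ ^ k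
      = U * diagonal (fun i => (ev i - 1) ^ m * ev i ^ k) * star U := by
    intro k
    rw [hsubpow, hpowk k, myConjMul _ _ _ hU2, diagonal_mul_diagonal]
  -- rewrite each summand times U
  have hBU : ∀ t : ℕ,
      (∑ s ∈ Finset.range (t + 1), M s * (Ψ - 1) ^ m * Ψ ^ (t - s)) * U
        = ∑ s ∈ Finset.range (t + 1),
            (M s * U) * diagonal (fun i => (ev i - 1) ^ m * ev i ^ (t - s)) := by
    intro t
    rw [Matrix.sum_mul]
    apply Finset.sum_congr rfl
    intro s _
    rw [Matrix.mul_assoc (M s), Matrix.mul_assoc (M s),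
      hkey (t - s), Matrix.mul_assoc, hU2, Matrix.mul_one, ← Matrix.mul_assoc]
  -- entrywise formula
  have hentry : ∀ (t : ℕ) (r : Fin d) (i : Fin N),
      (∑ s ∈ Finset.range (t + 1),
          (M s * U) * diagonal (fun j => (ev j - 1) ^ m * ev j ^ (t - s))) r i
        = ∑ s ∈ Finset.range (t + 1), (M s * U) r i * ((ev i - 1) ^ m * ev i ^ (t - s)) := by
    intro t r i
    rw [Matrix.sum_apply]
    apply Finset.sum_congr rfl
    intro s _
    rw [Matrix.mul_diagonal]
  have hfrob : ∀ t : ℕ,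
      frobSq (∑ s ∈ Finset.range (t + 1), M s * (Ψ - 1) ^ m * Ψ ^ (t - s))
        = ∑ r, ∑ i,
            (∑ s ∈ Finset.range (t + 1), (M s * U) r i * ((ev i - 1) ^ m * ev i ^ (t - s))) ^ 2 := by
    intro t
    rw [← frobSq_mul_orth _ U hUUt, hBU t]
    unfold frobSq
    apply Finset.sum_congr rfl; intro r _
    apply Finset.sum_congr rfl; intro i _
    rw [hentry t r i]
  -- per-direction bound
  have hper : ∀ (r : Fin d) (i : Fin N),
      ∑ t ∈ Finset.range T,
          (∑ s ∈ Finset.range (t + 1), (M s * U) r i * ((ev i - 1) ^ m * ev i ^ (t - s))) ^ 2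
        ≤ (1 - lamN) ^ (2 * m - 2) * ∑ t ∈ Finset.range T, ((M t * U) r i) ^ 2 := by
    intro r i
    set μ := ev i with hμ
    have h0 : 0 ≤ μ := hev0 i
    have h1 : μ ≤ 1 := hev1 i
    have hlm : lamN ≤ μ := hlam_le i
    have hsgn : ∀ t : ℕ,
        (∑ s ∈ Finset.range (t + 1), (M s * U) r i * ((μ - 1) ^ m * μ ^ (t - s))) ^ 2
          = (∑ s ∈ Finset.range (t + 1), (M s * U) r i * ((1 - μ) ^ m * μ ^ (t - s))) ^ 2 := by
      intro t
      have hm1 : ∑ s ∈ Finset.range (t + 1), (M s * U) r i * ((μ - 1) ^ m * μ ^ (t - s))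
          = (-1 : ℝ) ^ m * ∑ s ∈ Finset.range (t + 1),
              (M s * U) r i * ((1 - μ) ^ m * μ ^ (t - s)) := by
        rw [Finset.mul_sum]
        apply Finset.sum_congr rfl; intro s _
        rw [show (μ - 1) = (-1) * (1 - μ) by ring, mul_pow]
        ring
      rw [hm1, mul_pow, show ((-1 : ℝ) ^ m) ^ 2 = 1 by
        rw [← pow_mul, mul_comm, pow_mul, neg_one_sq, one_pow], one_mul]
    have hconv := conv_bound T (fun k => (1 - μ) ^ m * μ ^ k) (fun s => (M s * U) r i)
      (fun k => mul_nonneg (pow_nonneg (by linarith) _) (pow_nonneg h0 _))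
      ((1 - μ) ^ (m - 1)) (fun n => geom_bound μ h0 h1 m hm n)
    calc ∑ t ∈ Finset.range T,
          (∑ s ∈ Finset.range (t + 1), (M s * U) r i * ((μ - 1) ^ m * μ ^ (t - s))) ^ 2
        = ∑ t ∈ Finset.range T,
          (∑ s ∈ Finset.range (t + 1), (M s * U) r i * ((1 - μ) ^ m * μ ^ (t - s))) ^ 2 := by
          apply Finset.sum_congr rfl; intro t _; exact hsgn t
      _ ≤ ((1 - μ) ^ (m - 1)) ^ 2 * ∑ t ∈ Finset.range T, ((M t * U) r i) ^ 2 := hconv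
      _ = (1 - μ) ^ (2 * m - 2) * ∑ t ∈ Finset.range T, ((M t * U) r i) ^ 2 := by
          rw [← pow_mul]; congr 2; omega
      _ ≤ (1 - lamN) ^ (2 * m - 2) * ∑ t ∈ Finset.range T, ((M t * U) r i) ^ 2 := by
          apply mul_le_mul_of_nonneg_right
          · exact pow_le_pow_left₀ (by linarith) (by linarith) _
          · exact Finset.sum_nonneg fun t _ => sq_nonneg _
  -- assemble
  calc ∑ t ∈ Finset.range T,
        frobSq (∑ s ∈ Finset.range (t + 1), M s * (Ψ - 1) ^ m * Ψ ^ (t - s))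
      = ∑ t ∈ Finset.range T, ∑ r, ∑ i,
          (∑ s ∈ Finset.range (t + 1), (M s * U) r i * ((ev i - 1) ^ m * ev i ^ (t - s))) ^ 2 := by
        apply Finset.sum_congr rfl; intro t _; exact hfrob t
    _ = ∑ r, ∑ i, ∑ t ∈ Finset.range T,
          (∑ s ∈ Finset.range (t + 1), (M s * U) r i * ((ev i - 1) ^ m * ev i ^ (t - s))) ^ 2 :=
        Finset.sum_comm.trans
          (Finset.sum_congr rfl fun r _ => Finset.sum_comm)
    _ ≤ ∑ r, ∑ i, (1 - lamN) ^ (2 * m - 2) * ∑ t ∈ Finset.range T, ((M t * U) r i) ^ 2 := by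
        apply Finset.sum_le_sum; intro r _
        apply Finset.sum_le_sum; intro i _
        exact hper r i
    _ = (1 - lamN) ^ (2 * m - 2) * ∑ t ∈ Finset.range T, frobSq (M t) := by
        simp_rw [← Finset.mul_sum]
        congr 1
        calc ∑ r, ∑ i, ∑ t ∈ Finset.range T, ((M t * U) r i) ^ 2
            = ∑ r, ∑ t ∈ Finset.range T, ∑ i, ((M t * U) r i) ^ 2 :=
              Finset.sum_congr rfl fun r _ => Finset.sum_comm
          _ = ∑ t ∈ Finset.range T, ∑ r, ∑ i, ((M t * U) r i) ^ 2 := Finset.sum_comm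
          _ = ∑ t ∈ Finset.range T, frobSq (M t) := by
              apply Finset.sum_congr rfl; intro t _
              rw [← frobSq_mul_orth (M t) U hUUt]
              rfl
end

section
/- Let N ≥ 4, d ≥ 1, T ≥ 1, γ > 0, σ_z ≥ 0. Let J ∈ ℝ^{N×N} be the all-ones matrix and W = (J − I)/(N−1). On a probability space, for t = 0, …, T−1 let G_t, Φ_t ∈ ℝ^{d×N} be square-integrable random matrices with E‖Φ_t‖_F² ≤ σ_z²·d·N, and define X_{−1/2} = 0 and X_{t+1/2} = (X_{t−1/2} − γ G_t)·W + Φ_t·(W − I). Then Σ_{t=0}^{T−1} E‖X_{t−1/2}(I − (1/N)_N)‖_F² ≤ (2γ²(N−1)²/N²)·Σ_{t=0}^{T−1} E‖G_t‖_F² + 8·σ_z²·d·N·T. -/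
open MeasureTheory Matrix Finset

lemma frobSq_nonneg {d N : ℕ} (M : Matrix (Fin d) (Fin N) ℝ) : 0 ≤ frobSq M :=
  Finset.sum_nonneg fun _ _ => Finset.sum_nonneg fun _ _ => sq_nonneg _

lemma row_var {N : ℕ} (hN : 0 < N) (x : Fin N → ℝ) :
    ∑ c, (x c - (∑ j, x j) * (N : ℝ)⁻¹) ^ 2 ≤ ∑ c, (x c) ^ 2 := by
  have hNpos : (0:ℝ) < N := by exact_mod_cast hN
  set S := ∑ j, x j with hS
  set m := S * (N : ℝ)⁻¹ with hm
  have expand : ∑ c, (x c - m) ^ 2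
      = (∑ c, (x c)^2) - 2 * m * S + (N:ℝ) * m^2 := by
    have : ∀ c : Fin N, (x c - m)^2 = (x c)^2 - 2 * m * (x c) + m^2 := fun c => by ring
    rw [Finset.sum_congr rfl fun c _ => this c]
    rw [Finset.sum_add_distrib, Finset.sum_sub_distrib, ← Finset.mul_sum, Finset.sum_const,
      Finset.card_fin, ← hS]
    push_cast
    ring
  rw [expand]
  have hNm : (N:ℝ) * m = S := by
    rw [hm]; field_simp
  have h1 : (N:ℝ) * m^2 = m * S := by rw [pow_two, ← mul_assoc, hNm, mul_comm]
  have h2 : 0 ≤ m * S := by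
    rw [hm]; rw [mul_comm S, mul_assoc]
    exact mul_nonneg (inv_nonneg.mpr hNpos.le) (mul_self_nonneg S)
  linarith

lemma frobSq_mul_proj {d N : ℕ} (hN : 0 < N) (K : Matrix (Fin N) (Fin N) ℝ)
    (hK : K = Matrix.of fun _ _ => (N : ℝ)⁻¹) (M : Matrix (Fin d) (Fin N) ℝ) :
    frobSq (M * (1 - K)) ≤ frobSq M := by
  unfold frobSq
  apply Finset.sum_le_sum
  intro r _
  have hentry : ∀ c, ((M * (1 - K) : Matrix (Fin d) (Fin N) ℝ)) r c = M r c - (∑ j, M r j) * (N : ℝ)⁻¹ := by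
    intro c
    rw [Matrix.mul_sub, Matrix.mul_one, Matrix.sub_apply, Matrix.mul_apply, hK]
    simp [Finset.sum_mul]
  rw [Finset.sum_congr rfl fun c _ => by rw [hentry c]]
  exact row_var hN (fun c => M r c)

lemma weighted_cs {ι : Type*} (F : Finset ι) (a m : ι → ℝ) (ha : ∀ i ∈ F, 0 ≤ a i) :
    (∑ i ∈ F, a i * m i)^2 ≤ (∑ i ∈ F, a i) * (∑ i ∈ F, a i * (m i)^2) := by
  have key := Finset.sum_mul_sq_le_sq_mul_sq F (fun i => Real.sqrt (a i))
    (fun i => Real.sqrt (a i) * m i)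
  have h1 : ∀ i ∈ F, Real.sqrt (a i) * (Real.sqrt (a i) * m i) = a i * m i := by
    intro i hi
    rw [← mul_assoc, Real.mul_self_sqrt (ha i hi)]
  have h2 : ∀ i ∈ F, (Real.sqrt (a i))^2 = a i := fun i hi => Real.sq_sqrt (ha i hi)
  have h3 : ∀ i ∈ F, (Real.sqrt (a i) * m i)^2 = a i * (m i)^2 := by
    intro i hi
    rw [mul_pow, h2 i hi]
  rw [Finset.sum_congr rfl h1, Finset.sum_congr rfl h2, Finset.sum_congr rfl h3] at key
  exact key

lemma frobSq_sum_smul_le {d N : ℕ} {ι : Type*} (F : Finset ι) (a : ι → ℝ)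
    (M : ι → Matrix (Fin d) (Fin N) ℝ) :
    frobSq (∑ i ∈ F, a i • M i) ≤ (∑ i ∈ F, |a i|) * ∑ i ∈ F, |a i| * frobSq (M i) := by
  unfold frobSq
  have hpt : ∀ (r : Fin d) (c : Fin N),
      ((∑ i ∈ F, a i • M i) r c)^2 ≤ (∑ i ∈ F, |a i|) * ∑ i ∈ F, |a i| * (M i r c)^2 := by
    intro r c
    have hent : (∑ i ∈ F, a i • M i) r c = ∑ i ∈ F, a i * M i r c := by
      simp [Matrix.sum_apply]
    rw [hent]
    have habs : (∑ i ∈ F, a i * M i r c)^2 ≤ (∑ i ∈ F, |a i| * |M i r c|)^2 := by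
      rw [← sq_abs]
      apply pow_le_pow_left₀ (abs_nonneg _)
      calc |∑ i ∈ F, a i * M i r c| ≤ ∑ i ∈ F, |a i * M i r c| :=
            Finset.abs_sum_le_sum_abs _ _
        _ = ∑ i ∈ F, |a i| * |M i r c| := by
            exact Finset.sum_congr rfl fun i _ => abs_mul _ _
    refine habs.trans ?_
    have := weighted_cs F (fun i => |a i|) (fun i => |M i r c|) (fun i _ => abs_nonneg _)
    simpa [sq_abs] using this
  calc ∑ r, ∑ c, ((∑ i ∈ F, a i • M i) r c)^2
      ≤ ∑ r : Fin d, ∑ c : Fin N, (∑ i ∈ F, |a i|) * ∑ i ∈ F, |a i| * (M i r c)^2 :=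
        Finset.sum_le_sum fun r _ => Finset.sum_le_sum fun c _ => hpt r c
    _ = (∑ i ∈ F, |a i|) * ∑ r : Fin d, ∑ c : Fin N, ∑ i ∈ F, |a i| * (M i r c)^2 := by
        rw [Finset.mul_sum]
        exact Finset.sum_congr rfl fun r _ => (Finset.mul_sum _ _ _).symm
    _ = (∑ i ∈ F, |a i|) * ∑ i ∈ F, |a i| * ∑ r, ∑ c, (M i r c)^2 := by
        congr 1
        calc ∑ r : Fin d, ∑ c : Fin N, ∑ i ∈ F, |a i| * (M i r c)^2
            = ∑ r : Fin d, ∑ i ∈ F, ∑ c : Fin N, |a i| * (M i r c)^2 :=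
              Finset.sum_congr rfl fun r _ => Finset.sum_comm
          _ = ∑ i ∈ F, ∑ r : Fin d, ∑ c : Fin N, |a i| * (M i r c)^2 := Finset.sum_comm
          _ = ∑ i ∈ F, |a i| * ∑ r, ∑ c, (M i r c)^2 := by
              refine Finset.sum_congr rfl fun i _ => ?_
              rw [Finset.mul_sum]
              exact Finset.sum_congr rfl fun r _ => (Finset.mul_sum _ _ _).symm

lemma frobSq_add_two {d N : ℕ} (p q : ℝ) (A B : Matrix (Fin d) (Fin N) ℝ) :
    frobSq (p • A + q • B) ≤ 2 * p^2 * frobSq A + 2 * q^2 * frobSq B := by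
  unfold frobSq
  rw [Finset.mul_sum, Finset.mul_sum, ← Finset.sum_add_distrib]
  apply Finset.sum_le_sum
  intro r _
  rw [Finset.mul_sum, Finset.mul_sum, ← Finset.sum_add_distrib]
  apply Finset.sum_le_sum
  intro c _
  simp only [Matrix.add_apply, Matrix.smul_apply, smul_eq_mul]
  nlinarith [sq_nonneg (p * A r c - q * B r c)]

lemma geom_sum_le_3half {c : ℝ} (hc0 : 0 ≤ c) (hc : c ≤ 1/3) (n : ℕ) :
    ∑ k ∈ Finset.range n, c^k ≤ 3/2 := by
  induction n with
  | zero => simp; norm_num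
  | succ n ih =>
    rw [Finset.sum_range_succ']
    have h1 : ∑ k ∈ Finset.range n, c^(k+1) = c * ∑ k ∈ Finset.range n, c^k := by
      rw [Finset.mul_sum]
      exact Finset.sum_congr rfl fun k _ => by ring
    rw [h1, pow_zero]
    have hs : 0 ≤ ∑ k ∈ Finset.range n, c^k :=
      Finset.sum_nonneg fun k _ => pow_nonneg hc0 k
    nlinarith

lemma tri_sum (T : ℕ) {c : ℝ} (hc0 : 0 ≤ c) (hc : c ≤ 1/3) (v : ℕ → ℝ) (hv : ∀ s, 0 ≤ v s) :
    ∑ t ∈ Finset.range T, ∑ s ∈ Finset.range t, c^(t-1-s) * v s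
      ≤ (3/2) * ∑ s ∈ Finset.range T, v s := by
  have hswap : ∑ t ∈ Finset.range T, ∑ s ∈ Finset.range t, c^(t-1-s) * v s
      = ∑ s ∈ Finset.range T, ∑ t ∈ Finset.Ico (s+1) T, c^(t-1-s) * v s := by
    apply Finset.sum_comm'
    intro t s
    simp only [Finset.mem_range, Finset.mem_Ico]
    omega
  rw [hswap, Finset.mul_sum]
  apply Finset.sum_le_sum
  intro s _
  rw [← Finset.sum_mul]
  apply mul_le_mul_of_nonneg_right _ (hv s)
  rw [Finset.sum_Ico_eq_sum_range]
  have : ∀ k, c^(s + 1 + k - 1 - s) = c^k := by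
    intro k; congr 1; omega
  rw [Finset.sum_congr rfl fun k _ => this k]
  exact geom_sum_le_3half hc0 hc _


lemma coef1 {n : ℝ} (hn : 4 ≤ n) : (9:ℝ)/2 * ((n-1)⁻¹)^2 ≤ 2*(n-1)^2/n^2 := by
  have hn1 : (0:ℝ) < n - 1 := by linarith
  have hn0 : (0:ℝ) < n := by linarith
  have h9 : (9:ℝ) ≤ (n-1)^2 := by nlinarith
  have h4 : n^2 ≤ 4*(n-1)^2 := by nlinarith
  have hrw : (9:ℝ)/2 * ((n-1)⁻¹)^2 = (9/2) / (n-1)^2 := by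
    rw [inv_pow]; ring
  rw [hrw, div_le_div_iff₀ (by positivity) (by positivity)]
  nlinarith [mul_le_mul h4 h9 (by norm_num) (by positivity : (0:ℝ) ≤ 4*(n-1)^2)]

lemma coef2 {n : ℝ} (hn : 4 ≤ n) : (9:ℝ)/2*((n-1)⁻¹+1)^2 ≤ 8 := by
  have hn1 : (0:ℝ) < n - 1 := by linarith
  have hc1 : (n-1)⁻¹ + 1 = n/(n-1) := by field_simp; ring
  rw [hc1, div_pow]
  rw [show (9:ℝ)/2 * (n^2/(n-1)^2) = (9/2*n^2)/(n-1)^2 by ring]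
  rw [div_le_iff₀ (by positivity)]
  nlinarith [sq_nonneg (n-4)]


/-- **Consensus-deviation bound (Lemma 7).** With mixing matrix `W = (J−I)/(N−1)`,
`X_{−1/2} = 0`, recursion `X_{t+1/2} = (X_{t−1/2} − γG_t)W + Φ_t(W−I)` and perturbations
satisfying `E‖Φ_t‖_F² ≤ σ_z²dN`:
`Σ_{t<T} E‖X_{t−1/2}(I − (1/N)_N)‖_F² ≤ (2γ²(N−1)²/N²)·Σ_{t<T} E‖G_t‖_F² + 8σ_z²dNT`. -/
theorem dwfl_consensus_deviation (N d T : ℕ) (hN : 4 ≤ N) (hd : 1 ≤ d) (hT : 1 ≤ T)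
    (γ σz : ℝ) (hγ : 0 < γ) (hσz : 0 ≤ σz)
    {Ω : Type*} [MeasurableSpace Ω] (μ : Measure Ω) [IsProbabilityMeasure μ]
    (J W K : Matrix (Fin N) (Fin N) ℝ)
    (hJ : J = Matrix.of fun _ _ => (1 : ℝ))
    (hW : W = ((N : ℝ) - 1)⁻¹ • (J - 1))
    (hK : K = Matrix.of fun _ _ => (N : ℝ)⁻¹)
    (X G Φ : ℕ → Ω → Matrix (Fin d) (Fin N) ℝ)
    (hGint : ∀ t, Integrable (fun ω => frobSq (G t ω)) μ)
    (hΦint : ∀ t, Integrable (fun ω => frobSq (Φ t ω)) μ)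
    (hΦbound : ∀ t, t < T → ∫ ω, frobSq (Φ t ω) ∂μ ≤ σz ^ 2 * (d : ℝ) * (N : ℝ))
    (hX0 : ∀ ω, X 0 ω = 0)
    (hXrec : ∀ t ω, X (t + 1) ω = (X t ω - γ • G t ω) * W + Φ t ω * (W - 1)) :
    ∑ t ∈ Finset.range T, ∫ ω, frobSq (X t ω * (1 - K)) ∂μ ≤
      (2 * γ ^ 2 * ((N : ℝ) - 1) ^ 2 / (N : ℝ) ^ 2) *
          ∑ t ∈ Finset.range T, ∫ ω, frobSq (G t ω) ∂μ
        + 8 * σz ^ 2 * (d : ℝ) * (N : ℝ) * (T : ℝ) := by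
  have hN4 : (4:ℝ) ≤ (N:ℝ) := by exact_mod_cast hN
  have hNpos : 0 < N := by omega
  have hn1 : (0:ℝ) < (N:ℝ) - 1 := by linarith
  obtain ⟨c, hc⟩ : ∃ c : ℝ, c = ((N : ℝ) - 1)⁻¹ := ⟨_, rfl⟩
  rw [← hc] at hW
  have hc0 : 0 ≤ c := by rw [hc]; positivity
  have hc3 : c ≤ 1/3 := by
    have h3 : (3:ℝ) ≤ (N:ℝ) - 1 := by linarith
    have := inv_anti₀ (by norm_num : (0:ℝ) < 3) h3
    simpa [hc] using this
  have hNR : ((N:ℝ)) ≠ 0 := by positivity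
  -- matrix identities
  have hJK : J * K = J := by
    rw [hJ, hK]
    ext i j
    simp [Matrix.mul_apply, Finset.sum_const, Finset.card_fin, mul_inv_cancel₀ hNR]
  have hM1 : W * (1 - K) = (-c) • (1 - K) := by
    rw [hW, Matrix.smul_mul]
    have h : (J - 1) * (1 - K) = -(1 - K) := by
      rw [Matrix.sub_mul, Matrix.mul_sub, Matrix.mul_sub, hJK, Matrix.mul_one,
        Matrix.one_mul, Matrix.one_mul]
      abel
    rw [h, smul_neg, ← neg_smul]
  have hM2 : (W - 1) * (1 - K) = (-(c+1)) • (1 - K) := by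
    rw [Matrix.sub_mul, hM1, Matrix.one_mul]
    module
  -- the driving matrices
  obtain ⟨B, hB⟩ : ∃ B : ℕ → Ω → Matrix (Fin d) (Fin N) ℝ,
      B = fun s ω => (c*γ) • (G s ω * (1 - K)) + (-(c+1)) • (Φ s ω * (1 - K)) := ⟨_, rfl⟩
  have hYrec : ∀ t ω, X (t+1) ω * (1 - K) = (-c) • (X t ω * (1 - K)) + B t ω := by
    intro t ω
    rw [hXrec, Matrix.add_mul, Matrix.mul_assoc, hM1, Matrix.mul_assoc, hM2,
      Matrix.mul_smul, Matrix.mul_smul, Matrix.sub_mul, Matrix.smul_mul]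
    simp only [hB]
    module
  have hYc : ∀ t, ∀ ω, X t ω * (1 - K) = ∑ s ∈ Finset.range t, (-c)^(t-1-s) • B s ω := by
    intro t
    induction t with
    | zero => intro ω; simp [hX0, Matrix.zero_mul]
    | succ t ih =>
      intro ω
      rw [hYrec t ω, ih ω, Finset.sum_range_succ, Finset.smul_sum]
      congr 1
      · apply Finset.sum_congr rfl
        intro s hs
        simp only [Finset.mem_range] at hs
        have h1 : t + 1 - 1 - s = (t - 1 - s) + 1 := by omega
        rw [h1, pow_succ', smul_smul]
      · have h0 : t + 1 - 1 - t = 0 := by omega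
        rw [h0, pow_zero, one_smul]
  -- pointwise bound on B
  have hBbd : ∀ s ω, frobSq (B s ω)
      ≤ 2*(c*γ)^2 * frobSq (G s ω) + 2*(c+1)^2 * frobSq (Φ s ω) := by
    intro s ω
    rw [hB]
    refine (frobSq_add_two _ _ _ _).trans ?_
    have hg := frobSq_mul_proj hNpos K hK (G s ω)
    have hp := frobSq_mul_proj hNpos K hK (Φ s ω)
    have e : (-(c+1))^2 = (c+1)^2 := by ring
    rw [e]
    have c1 : (0:ℝ) ≤ 2*(c*γ)^2 := by positivity
    have c2 : (0:ℝ) ≤ 2*(c+1)^2 := by positivity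
    exact add_le_add (mul_le_mul_of_nonneg_left hg c1) (mul_le_mul_of_nonneg_left hp c2)
  -- dominating function
  obtain ⟨D, hD⟩ : ∃ D : ℕ → Ω → ℝ, D = fun t ω => ∑ s ∈ Finset.range t,
      c^(t-1-s) * (2*(c*γ)^2 * frobSq (G s ω) + 2*(c+1)^2 * frobSq (Φ s ω)) := ⟨_, rfl⟩
  have hpt : ∀ t ω, frobSq (X t ω * (1 - K)) ≤ (3/2) * D t ω := by
    intro t ω
    rw [hYc t ω]
    simp only [hD]
    refine (frobSq_sum_smul_le _ _ _).trans ?_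
    have habs : ∀ s : ℕ, |(-c)^(t-1-s)| = c^(t-1-s) := fun s => by
      rw [abs_pow, abs_neg, abs_of_nonneg hc0]
    simp only [habs]
    apply mul_le_mul
    · exact le_trans (le_of_eq (Finset.sum_range_reflect (fun k => c^k) t))
        (geom_sum_le_3half hc0 hc3 t)
    · apply Finset.sum_le_sum
      intro s _
      exact mul_le_mul_of_nonneg_left (hBbd s ω) (pow_nonneg hc0 _)
    · exact Finset.sum_nonneg fun s _ => mul_nonneg (pow_nonneg hc0 _) (frobSq_nonneg _)
    · norm_num
  -- integrability
  have hterm_int : ∀ (t s : ℕ), Integrable (fun ω =>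
      c^(t-1-s) * (2*(c*γ)^2 * frobSq (G s ω) + 2*(c+1)^2 * frobSq (Φ s ω))) μ :=
    fun t s => (((hGint s).const_mul _).add ((hΦint s).const_mul _)).const_mul _
  have hDint : ∀ t, Integrable (fun ω => D t ω) μ := by
    intro t
    simp only [hD]
    exact integrable_finset_sum _ fun s _ => hterm_int t s
  obtain ⟨v, hv⟩ : ∃ v : ℕ → ℝ, v = fun s => 2*(c*γ)^2 * (∫ ω, frobSq (G s ω) ∂μ)
      + 2*(c+1)^2 * (∫ ω, frobSq (Φ s ω) ∂μ) := ⟨_, rfl⟩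
  have hvnn : ∀ s, 0 ≤ v s := by
    intro s
    have h1 := integral_nonneg (μ := μ) (f := fun ω => frobSq (G s ω)) (fun ω => frobSq_nonneg (G s ω))
    have h2 := integral_nonneg (μ := μ) (f := fun ω => frobSq (Φ s ω)) (fun ω => frobSq_nonneg (Φ s ω))
    have c1 : (0:ℝ) ≤ 2*(c*γ)^2 := by positivity
    have c2 : (0:ℝ) ≤ 2*(c+1)^2 := by positivity
    simp only [hv]
    exact add_nonneg (mul_nonneg c1 h1) (mul_nonneg c2 h2)
  have hDval : ∀ t, ∫ ω, D t ω ∂μ = ∑ s ∈ Finset.range t, c^(t-1-s) * v s := by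
    intro t
    simp only [hD]
    rw [integral_finset_sum _ fun s _ => hterm_int t s]
    refine Finset.sum_congr rfl fun s _ => ?_
    rw [integral_const_mul]
    congr 1
    rw [integral_add ((hGint s).const_mul _) ((hΦint s).const_mul _),
      integral_const_mul, integral_const_mul, hv]
  have het : ∀ t, (∫ ω, frobSq (X t ω * (1 - K)) ∂μ)
      ≤ (3/2) * ∑ s ∈ Finset.range t, c^(t-1-s) * v s := by
    intro t
    calc ∫ ω, frobSq (X t ω * (1 - K)) ∂μ ≤ ∫ ω, (3/2) * D t ω ∂μ := by
          apply integral_mono_of_nonneg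
          · exact Filter.Eventually.of_forall fun ω => frobSq_nonneg _
          · exact (hDint t).const_mul _
          · exact Filter.Eventually.of_forall fun ω => hpt t ω
      _ = (3/2) * ∫ ω, D t ω ∂μ := integral_const_mul _ _
      _ = _ := by rw [hDval t]
  have hsum : ∑ t ∈ Finset.range T, ∫ ω, frobSq (X t ω * (1 - K)) ∂μ
      ≤ (3/2) * ((3/2) * ∑ s ∈ Finset.range T, v s) := by
    calc ∑ t ∈ Finset.range T, ∫ ω, frobSq (X t ω * (1 - K)) ∂μ
        ≤ ∑ t ∈ Finset.range T, (3/2) * ∑ s ∈ Finset.range t, c^(t-1-s) * v s :=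
          Finset.sum_le_sum fun t _ => het t
      _ = (3/2) * ∑ t ∈ Finset.range T, ∑ s ∈ Finset.range t, c^(t-1-s) * v s := by
          rw [Finset.mul_sum]
      _ ≤ (3/2) * ((3/2) * ∑ s ∈ Finset.range T, v s) := by
          apply mul_le_mul_of_nonneg_left _ (by norm_num)
          exact tri_sum T hc0 hc3 v hvnn
  -- sums of integrals
  obtain ⟨GS, hGS⟩ : ∃ GS : ℝ, GS = ∑ t ∈ Finset.range T, ∫ ω, frobSq (G t ω) ∂μ := ⟨_, rfl⟩
  obtain ⟨PS, hPS⟩ : ∃ PS : ℝ, PS = ∑ t ∈ Finset.range T, ∫ ω, frobSq (Φ t ω) ∂μ := ⟨_, rfl⟩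
  have hGSnn : 0 ≤ GS := hGS ▸
    Finset.sum_nonneg fun t _ => integral_nonneg (μ := μ) fun ω => frobSq_nonneg _
  have hPSnn : 0 ≤ PS := hPS ▸
    Finset.sum_nonneg fun t _ => integral_nonneg (μ := μ) fun ω => frobSq_nonneg _
  have hΦsum : PS ≤ σz^2 * (d:ℝ) * (N:ℝ) * (T:ℝ) := by
    rw [hPS]
    calc (∑ t ∈ Finset.range T, ∫ ω, frobSq (Φ t ω) ∂μ)
        ≤ ∑ _s ∈ Finset.range T, σz^2 * (d:ℝ) * (N:ℝ) :=
          Finset.sum_le_sum fun s hs => hΦbound s (Finset.mem_range.mp hs)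
      _ = (T:ℝ) * (σz^2 * (d:ℝ) * (N:ℝ)) := by
          rw [Finset.sum_const, Finset.card_range, nsmul_eq_mul]
      _ = σz^2 * (d:ℝ) * (N:ℝ) * (T:ℝ) := by ring
  have hvsum : ∑ s ∈ Finset.range T, v s = 2*(c*γ)^2 * GS + 2*(c+1)^2 * PS := by
    simp only [hv, hGS, hPS]
    rw [Finset.sum_add_distrib, ← Finset.mul_sum, ← Finset.mul_sum]
  -- coefficient inequalities
  have A1 : (9:ℝ)/2 * c^2 ≤ 2*((N:ℝ)-1)^2/(N:ℝ)^2 := by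
    rw [hc]; exact coef1 hN4
  have A1' : (9:ℝ)/2*(c*γ)^2 ≤ 2*γ^2*((N:ℝ)-1)^2/(N:ℝ)^2 := by
    have h := mul_le_mul_of_nonneg_right A1 (sq_nonneg γ)
    calc (9:ℝ)/2*(c*γ)^2 = (9/2*c^2) * γ^2 := by ring
      _ ≤ (2*((N:ℝ)-1)^2/(N:ℝ)^2) * γ^2 := h
      _ = 2*γ^2*((N:ℝ)-1)^2/(N:ℝ)^2 := by ring
  have A2 : (9:ℝ)/2*(c+1)^2 ≤ 8 := by
    rw [hc]; exact coef2 hN4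
  -- final assembly
  have hfinal : (3/2) * ((3/2) * (2*(c*γ)^2 * GS + 2*(c+1)^2 * PS))
      ≤ (2*γ^2*((N:ℝ)-1)^2/(N:ℝ)^2) * GS + 8*σz^2*(d:ℝ)*(N:ℝ)*(T:ℝ) := by
    have e : (3/2) * ((3/2) * (2*(c*γ)^2 * GS + 2*(c+1)^2 * PS))
        = ((9:ℝ)/2*(c*γ)^2) * GS + ((9:ℝ)/2*(c+1)^2) * PS := by ring
    rw [e]
    have t1 : ((9:ℝ)/2*(c*γ)^2) * GS ≤ (2*γ^2*((N:ℝ)-1)^2/(N:ℝ)^2) * GS :=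
      mul_le_mul_of_nonneg_right A1' hGSnn
    have t2 : ((9:ℝ)/2*(c+1)^2) * PS ≤ 8 * PS := mul_le_mul_of_nonneg_right A2 hPSnn
    nlinarith [hΦsum]
  rw [hvsum] at hsum
  rw [← hGS]
  linarith [hsum, hfinal]
end
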